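/- arXiv:1306.1449 — 7 statements merged into one kernel-verified Lean document; each statement's English description precedes it below -/
import Mathlib

section
/- Let μ > 0 and let h : ℝ → ℝ be continuous and 1-periodic. Then the function v = P∗h is twice continuously differentiable, 1-periodic, and satisfies v(x) − (μ/12)·v''(x) = h(x) for every x ∈ ℝ. -/
/-- The 1-periodic Green's function of the operator `1 - (μ/12)∂ₓ²`. -/
noncomputable def P (μ x : ℝ) : ℝ :=
  Real.sqrt (3/μ) *
    (Real.exp (2 * Real.sqrt (3/μ) * (x - ⌊x⌋)) +
     Real.exp (2 * Real.sqrt (3/μ) * (1 - (x - ⌊x⌋)))) /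
  (Real.exp (2 * Real.sqrt (3/μ)) - 1)

/-- Periodic convolution with the kernel `P` over one period. -/
noncomputable def pconv (μ : ℝ) (h : ℝ → ℝ) (x : ℝ) : ℝ :=
  ∫ y in (0:ℝ)..1, P μ (x - y) * h y

lemma P_periodic (μ : ℝ) : Function.Periodic (P μ) 1 := by
  intro x
  simp only [P]
  have hfl : ((⌊x + 1⌋ : ℤ) : ℝ) = (⌊x⌋ : ℝ) + 1 := by
    rw [Int.floor_add_one]; push_cast; ring
  rw [hfl]
  ring_nf

lemma P_eq (μ : ℝ) (hμ : 0 < μ) {t : ℝ} (h0 : 0 ≤ t) (h1 : t ≤ 1) :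
    P μ t = Real.sqrt (3/μ) / (Real.exp (2*Real.sqrt (3/μ)) - 1) *
      (Real.exp (2*Real.sqrt (3/μ)*t) +
        Real.exp (2*Real.sqrt (3/μ)) * Real.exp (-(2*Real.sqrt (3/μ)*t))) := by
  set a := Real.sqrt (3/μ) with ha
  rcases h1.lt_or_eq with h1 | rfl
  · have hfl : ⌊t⌋ = 0 := Int.floor_eq_zero_iff.2 ⟨h0, h1⟩
    simp only [P, ← ha, hfl, Int.cast_zero, sub_zero]
    rw [show 2*a*(1-t) = 2*a + -(2*a*t) by ring, Real.exp_add]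
    ring
  · have hfl : ⌊(1:ℝ)⌋ = 1 := Int.floor_one
    simp only [P, ← ha, hfl, Int.cast_one, sub_self, sub_zero, mul_zero, Real.exp_zero,
      mul_one]
    rw [show Real.exp (2*a) * Real.exp (-(2*a)) = 1 by rw [← Real.exp_add]; simp]
    ring

/-- For `μ > 0` and `h` continuous and 1-periodic, `v = P∗h` is twice continuously
differentiable, 1-periodic, and satisfies `v - (μ/12)·v'' = h` everywhere. -/
theorem stmt1 (μ : ℝ) (hμ : 0 < μ) (h : ℝ → ℝ) (hc : Continuous h)
    (hp : Function.Periodic h 1) :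
    ContDiff ℝ 2 (pconv μ h) ∧ Function.Periodic (pconv μ h) 1 ∧
      ∀ x : ℝ, pconv μ h x - (μ/12) * deriv (deriv (pconv μ h)) x = h x := by
  set a := Real.sqrt (3/μ) with ha
  have ha0 : 0 < a := Real.sqrt_pos.2 (by positivity)
  have ha2 : a^2 = 3/μ := Real.sq_sqrt (by positivity)
  set E := Real.exp (2*a) with hE
  have hE0 : 0 < E := Real.exp_pos _
  have hE1 : 1 < E := by
    rw [hE, show (1:ℝ) = Real.exp 0 from (Real.exp_zero).symm]
    exact Real.exp_lt_exp.2 (by positivity)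
  have hEne : E - 1 ≠ 0 := by linarith
  set c := a / (E - 1) with hc'
  set f : ℝ → ℝ := fun y => Real.exp (-(2*a*y)) * h y with hf
  set k : ℝ → ℝ := fun y => Real.exp (2*a*y) * h y with hk
  have hfc : Continuous f := (Real.continuous_exp.comp (by continuity)).mul hc
  have hkc : Continuous k := (Real.continuous_exp.comp (by continuity)).mul hc
  set F : ℝ → ℝ := fun u => ∫ y in (0:ℝ)..u, f y with hF
  set K : ℝ → ℝ := fun u => ∫ y in (0:ℝ)..u, k y with hK
  have hFd : ∀ u, HasDerivAt F (f u) u := fun u =>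
    intervalIntegral.integral_hasDerivAt_right (hfc.intervalIntegrable _ _)
      (hfc.aestronglyMeasurable.stronglyMeasurableAtFilter) hfc.continuousAt
  have hKd : ∀ u, HasDerivAt K (k u) u := fun u =>
    intervalIntegral.integral_hasDerivAt_right (hkc.intervalIntegrable _ _)
      (hkc.aestronglyMeasurable.stronglyMeasurableAtFilter) hkc.continuousAt
  -- the key closed formula
  have key : ∀ x, pconv μ h x =
      c * (Real.exp (2*a*x) * (F x - F (x-1)) +
           E * (Real.exp (-(2*a*x)) * (K x - K (x-1)))) := by
    intro x
    have hper : Function.Periodic (fun y => P μ (x - y) * h y) 1 := by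
      intro y
      have h1 : P μ (x - (y+1)) = P μ (x - y) := by
        have := (P_periodic μ) (x - (y + 1))
        rw [show x - (y+1) + 1 = x - y by ring] at this
        exact this.symm
      simp only [h1, hp y]
    have step1 : pconv μ h x = ∫ y in (x-1)..x, P μ (x - y) * h y := by
      rw [pconv]
      have := hper.intervalIntegral_add_eq (x-1) 0
      simpa using this.symm
    have step2 : (∫ y in (x-1)..x, P μ (x - y) * h y)
        = ∫ y in (x-1)..x, ((c * Real.exp (2*a*x)) * f y + (c * E * Real.exp (-(2*a*x))) * k y) := by
      apply intervalIntegral.integral_congr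
      intro y hy
      rw [Set.uIcc_of_le (by linarith)] at hy
      show P μ (x - y) * h y = (c * Real.exp (2*a*x)) * f y + (c * E * Real.exp (-(2*a*x))) * k y
      have h0 : 0 ≤ x - y := by linarith [hy.2]
      have h1 : x - y ≤ 1 := by linarith [hy.1]
      rw [P_eq μ hμ h0 h1, ← ha, ← hE]
      simp only [hf, hk]
      rw [show -(2*a*(x-y)) = -(2*a*x) + 2*a*y by ring, Real.exp_add,
          show 2*a*(x-y) = 2*a*x + -(2*a*y) by ring, Real.exp_add]
      rw [hc']
      ring
    rw [step1, step2]
    rw [intervalIntegral.integral_add ((hfc.intervalIntegrable _ _).const_mul _)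
        ((hkc.intervalIntegrable _ _).const_mul _),
        intervalIntegral.integral_const_mul, intervalIntegral.integral_const_mul]
    rw [show F x - F (x-1) = ∫ y in (x-1)..x, f y from
          intervalIntegral.integral_interval_sub_left (hfc.intervalIntegrable _ _)
            (hfc.intervalIntegrable _ _),
        show K x - K (x-1) = ∫ y in (x-1)..x, k y from
          intervalIntegral.integral_interval_sub_left (hkc.intervalIntegrable _ _)
            (hkc.intervalIntegrable _ _)]
    ring
  -- rewriting helpers
  have hexp_ne : ∀ z : ℝ, Real.exp z ≠ 0 := fun z => (Real.exp_pos z).ne'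
  have r1 : ∀ x : ℝ, Real.exp (2*a*(x-1)) = Real.exp (2*a*x) / E := by
    intro x; rw [eq_div_iff (by rw [hE]; exact hexp_ne _), hE, ← Real.exp_add]; ring_nf
  have r2 : ∀ x : ℝ, Real.exp (-(2*a*(x-1))) = E / Real.exp (2*a*x) := by
    intro x; rw [eq_div_iff (hexp_ne _), hE, ← Real.exp_add]; ring_nf
  have r3 : ∀ x : ℝ, Real.exp (-(2*a*x)) = 1 / Real.exp (2*a*x) := by
    intro x; rw [eq_div_iff (hexp_ne _), ← Real.exp_add]; simp
  have hhx : ∀ x : ℝ, h (x - 1) = h x := fun x => hp.sub_eq x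
  -- derivative building blocks
  have hexpd : ∀ x : ℝ, HasDerivAt (fun x => Real.exp (2*a*x)) (2*a*Real.exp (2*a*x)) x := by
    intro x
    have := ((hasDerivAt_id x).const_mul (2*a)).exp
    simpa [mul_comm] using this
  have hexpd' : ∀ x : ℝ, HasDerivAt (fun x => Real.exp (-(2*a*x))) (-(2*a)*Real.exp (-(2*a*x))) x := by
    intro x
    have := ((hasDerivAt_id x).const_mul (-(2*a))).exp
    simpa [mul_comm, neg_mul] using this
  have hFDd : ∀ x : ℝ, HasDerivAt (fun x => F x - F (x-1)) (f x - f (x-1)) x := by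
    intro x
    have h2 : HasDerivAt (fun x : ℝ => F (x-1)) (f (x-1)) x := by
      have := (hFd (x-1)).comp x ((hasDerivAt_id x).sub_const 1)
      simpa [Function.comp_def] using this
    exact (hFd x).sub h2
  have hKDd : ∀ x : ℝ, HasDerivAt (fun x => K x - K (x-1)) (k x - k (x-1)) x := by
    intro x
    have h2 : HasDerivAt (fun x : ℝ => K (x-1)) (k (x-1)) x := by
      have := (hKd (x-1)).comp x ((hasDerivAt_id x).sub_const 1)
      simpa [Function.comp_def] using this
    exact (hKd x).sub h2
  -- first derivative
  set v1 : ℝ → ℝ := fun x => 2*a*c * (Real.exp (2*a*x) * (F x - F (x-1)) -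
      E * (Real.exp (-(2*a*x)) * (K x - K (x-1)))) with hv1
  have hvd : ∀ x, HasDerivAt (pconv μ h) (v1 x) x := by
    intro x
    have hform : HasDerivAt (fun x => c * (Real.exp (2*a*x) * (F x - F (x-1)) +
        E * (Real.exp (-(2*a*x)) * (K x - K (x-1)))))
        (c * ((2*a*Real.exp (2*a*x) * (F x - F (x-1)) + Real.exp (2*a*x) * (f x - f (x-1))) +
          E * (-(2*a)*Real.exp (-(2*a*x)) * (K x - K (x-1)) + Real.exp (-(2*a*x)) * (k x - k (x-1))))) x :=
      ((((hexpd x).mul (hFDd x)).add (((hexpd' x).mul (hKDd x)).const_mul E)).const_mul c)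
    have heq : pconv μ h = fun x => c * (Real.exp (2*a*x) * (F x - F (x-1)) +
        E * (Real.exp (-(2*a*x)) * (K x - K (x-1)))) := funext key
    rw [heq]
    convert hform using 1
    simp only [hv1, hf, hk, hhx x, r1 x, r2 x, r3 x]
    field_simp
    ring
  -- second derivative
  have hv1d : ∀ x, HasDerivAt v1 (4*a^2*(pconv μ h x - h x)) x := by
    intro x
    have hform : HasDerivAt v1
        (2*a*c * ((2*a*Real.exp (2*a*x) * (F x - F (x-1)) + Real.exp (2*a*x) * (f x - f (x-1))) -
          E * (-(2*a)*Real.exp (-(2*a*x)) * (K x - K (x-1)) + Real.exp (-(2*a*x)) * (k x - k (x-1))))) x :=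
      ((((hexpd x).mul (hFDd x)).sub (((hexpd' x).mul (hKDd x)).const_mul E)).const_mul (2*a*c))
    convert hform using 1
    rw [key x]
    simp only [hf, hk, hhx x, r1 x, r2 x, r3 x, hc']
    field_simp
    ring
  have hdv : deriv (pconv μ h) = v1 := funext fun x => (hvd x).deriv
  have hddv : deriv (deriv (pconv μ h)) = fun x => 4*a^2*(pconv μ h x - h x) := by
    rw [hdv]; exact funext fun x => (hv1d x).deriv
  have hvdiff : Differentiable ℝ (pconv μ h) := fun x => (hvd x).differentiableAt
  have hvcont : Continuous (pconv μ h) := hvdiff.continuous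
  refine ⟨?_, ?_, ?_⟩
  · rw [show (2 : WithTop ℕ∞) = 1 + 1 from by rw [one_add_one_eq_two], contDiff_succ_iff_deriv]
    refine ⟨hvdiff, by simp, ?_⟩
    rw [hdv, contDiff_one_iff_deriv]
    refine ⟨fun x => (hv1d x).differentiableAt, ?_⟩
    rw [funext fun x => (hv1d x).deriv]
    exact continuous_const.mul (hvcont.sub hc)
  · intro x
    simp only [pconv]
    apply intervalIntegral.integral_congr
    intro y _
    show P μ (x + 1 - y) * h y = P μ (x - y) * h y
    rw [show x + 1 - y = (x - y) + 1 by ring, P_periodic μ (x - y)]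
  · intro x
    simp only [hddv]
    have h12 : μ/12 * (4*a^2) = 1 := by rw [ha2]; field_simp; ring
    linear_combination (-(pconv μ h x - h x)) * h12
end

section
/- Let u be a classical 1-periodic solution of the moderate-amplitude surface wave equation on [0,T). Then the energy E(t) = (1/2)∫₀¹ (u(x,t)² + (μ/12)·u_x(x,t)²) dx is constant in t on [0,T). -/
open Set MeasureTheory intervalIntegral

private lemma aux_periodic_deriv {f g : ℝ → ℝ} (hf : Function.Periodic f 1)
    (hg : ∀ x, HasDerivAt f (g x) x) : Function.Periodic g 1 := by
  intro x
  have h1 : HasDerivAt (fun y : ℝ => f (y + 1)) (g (x + 1)) x := by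
    simpa [Function.comp_def] using (hg (x + 1)).comp x ((hasDerivAt_id x).add_const 1)
  have h2 : (fun y : ℝ => f (y + 1)) = f := funext fun y => hf y
  rw [h2] at h1
  exact h1.unique (hg x)

private lemma aux_memIoi {T τ : ℝ} (h0 : 0 ≤ τ) (hτT : τ < T) :
    Set.Ico (0:ℝ) T ∈ nhdsWithin τ (Set.Ioi τ) := by
  filter_upwards [self_mem_nhdsWithin, mem_nhdsWithin_of_mem_nhds (Iio_mem_nhds hτT)] with y hy1 hy2
  exact ⟨le_trans h0 (le_of_lt hy1), hy2⟩

private lemma aux_memIci {T τ : ℝ} (h0 : 0 ≤ τ) (hτT : τ < T) :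
    Set.Ico (0:ℝ) T ∈ nhdsWithin τ (Set.Ici τ) := by
  filter_upwards [self_mem_nhdsWithin, mem_nhdsWithin_of_mem_nhds (Iio_mem_nhds hτT)] with y hy1 hy2
  exact ⟨le_trans h0 hy1, hy2⟩

private lemma aux_sliceT {T : ℝ} {f : ℝ → ℝ → ℝ}
    (hc : ContinuousOn (fun p : ℝ × ℝ => f p.1 p.2) (Set.univ ×ˢ Set.Ico (0:ℝ) T)) (x : ℝ) :
    ContinuousOn (fun τ => f x τ) (Set.Ico (0:ℝ) T) := by
  have h : ContinuousOn (fun τ : ℝ => ((x, τ) : ℝ × ℝ)) (Set.Ico (0:ℝ) T) :=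
    (continuous_const.prodMk continuous_id).continuousOn
  exact hc.comp h fun τ hτ => ⟨Set.mem_univ _, hτ⟩

/-- The spatial integral of `u·u_t + (μ/12) u_x·u_tx` vanishes at each fixed time, by
multiplying the equation by `u` and integrating by parts using periodicity. -/
private lemma aux_zero (ε μ T : ℝ)
    (u ux uxx uxxx ut utx utxx : ℝ → ℝ → ℝ)
    (hper : ∀ t ∈ Set.Ico (0:ℝ) T, Function.Periodic (fun x => u x t) 1)
    (hux : ∀ (x : ℝ), ∀ t ∈ Set.Ico (0:ℝ) T, HasDerivAt (fun x' => u x' t) (ux x t) x)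
    (huxx : ∀ (x : ℝ), ∀ t ∈ Set.Ico (0:ℝ) T, HasDerivAt (fun x' => ux x' t) (uxx x t) x)
    (huxxx : ∀ (x : ℝ), ∀ t ∈ Set.Ico (0:ℝ) T, HasDerivAt (fun x' => uxx x' t) (uxxx x t) x)
    (hut : ∀ (x : ℝ), ∀ t ∈ Set.Ico (0:ℝ) T,
      HasDerivWithinAt (fun t' => u x t') (ut x t) (Set.Ico (0:ℝ) T) t)
    (hutx : ∀ (x : ℝ), ∀ t ∈ Set.Ico (0:ℝ) T, HasDerivAt (fun x' => ut x' t) (utx x t) x)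
    (hutxx : ∀ (x : ℝ), ∀ t ∈ Set.Ico (0:ℝ) T, HasDerivAt (fun x' => utx x' t) (utxx x t) x)
    (heqn : ∀ (x : ℝ), ∀ t ∈ Set.Ico (0:ℝ) T,
      ut x t + ux x t + (3/2) * ε * u x t * ux x t - (3/8) * ε^2 * (u x t)^2 * ux x t
        + (3/16) * ε^3 * (u x t)^3 * ux x t + (μ/12) * (uxxx x t - utxx x t)
        + (7 * ε * μ / 24) * (u x t * uxxx x t + 2 * ux x t * uxx x t) = 0)
    (τ : ℝ) (hτ : τ ∈ Set.Ico (0:ℝ) T) :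
    ∫ x in (0:ℝ)..1, (u x τ * ut x τ + (μ/12) * (ux x τ * utx x τ)) = 0 := by
  -- periodicity of all spatial fields
  have hpu : Function.Periodic (fun x => u x τ) 1 := hper τ hτ
  have hpux : Function.Periodic (fun x => ux x τ) 1 :=
    aux_periodic_deriv hpu (fun x => hux x τ hτ)
  have hpuxx : Function.Periodic (fun x => uxx x τ) 1 :=
    aux_periodic_deriv hpux (fun x => huxx x τ hτ)
  have hput : Function.Periodic (fun x => ut x τ) 1 := by
    intro x
    have huniq : UniqueDiffWithinAt ℝ (Set.Ico (0:ℝ) T) τ := uniqueDiffOn_Ico 0 T τ hτ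
    have h1 : HasDerivWithinAt (fun τ' => u x τ') (ut (x+1) τ) (Set.Ico (0:ℝ) T) τ :=
      (hut (x+1) τ hτ).congr (fun τ' hτ' => (hper τ' hτ' x).symm) ((hper τ hτ x).symm)
    exact (h1.derivWithin huniq).symm.trans ((hut x τ hτ).derivWithin huniq)
  have hputx : Function.Periodic (fun x => utx x τ) 1 :=
    aux_periodic_deriv hput (fun x => hutx x τ hτ)
  -- the antiderivative
  have hΦ : ∀ x : ℝ, HasDerivAt
      (fun y => -((u y τ)^2/2 + (ε/2)*(u y τ)^3 - (3/32*ε^2)*(u y τ)^4 + (3/80*ε^3)*(u y τ)^5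
          + (μ/12)*((u y τ) * (uxx y τ) - (ux y τ)^2/2) + (7*ε*μ/24)*((u y τ)^2 * (uxx y τ)))
        + (μ/12)*((u y τ) * (utx y τ)))
      (u x τ * ut x τ + (μ/12) * (ux x τ * utx x τ)) x := by
    intro x
    have dU := hux x τ hτ
    have dUX := huxx x τ hτ
    have dUXX := huxxx x τ hτ
    have dUTX := hutxx x τ hτ
    have h0 := ((((((((dU.pow 2).div_const 2).add ((dU.pow 3).const_mul (ε/2))).sub
        ((dU.pow 4).const_mul (3/32*ε^2))).add ((dU.pow 5).const_mul (3/80*ε^3))).add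
        (((dU.mul dUXX).sub ((dUX.pow 2).div_const 2)).const_mul (μ/12))).add
        (((dU.pow 2).mul dUXX).const_mul (7*ε*μ/24))).neg).add
        ((dU.mul dUTX).const_mul (μ/12))
    refine h0.congr_deriv ?_
    symm
    simp only [Pi.pow_apply]
    push_cast
    linear_combination (u x τ) * heqn x τ hτ
  -- integrability of the integrand
  have cx : ∀ (f g : ℝ → ℝ → ℝ),
      (∀ (x : ℝ), HasDerivAt (fun x' => f x' τ) (g x τ) x) → Continuous fun x => f x τ := by
    intro f g h
    rw [continuous_iff_continuousAt]
    exact fun x => (h x).continuousAt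
  have cu' : Continuous fun x => u x τ := cx u ux fun x => hux x τ hτ
  have cux' : Continuous fun x => ux x τ := cx ux uxx fun x => huxx x τ hτ
  have cut' : Continuous fun x => ut x τ := cx ut utx fun x => hutx x τ hτ
  have cutx' : Continuous fun x => utx x τ := cx utx utxx fun x => hutxx x τ hτ
  have hint : IntervalIntegrable
      (fun x => u x τ * ut x τ + (μ/12) * (ux x τ * utx x τ)) volume 0 1 :=
    ((cu'.mul cut').add (continuous_const.mul (cux'.mul cutx'))).intervalIntegrable 0 1
  have hsub := intervalIntegral.integral_eq_sub_of_hasDerivAt (fun x _ => hΦ x) hint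
  rw [hsub]
  have e1 : u 1 τ = u 0 τ := by simpa using hpu 0
  have e2 : ux 1 τ = ux 0 τ := by simpa using hpux 0
  have e3 : uxx 1 τ = uxx 0 τ := by simpa using hpuxx 0
  have e4 : utx 1 τ = utx 0 τ := by simpa using hputx 0
  simp only [e1, e2, e3, e4]
  ring

/-- The time derivative of `u_x` is `u_tx` (one-sided, from the right), obtained by
differentiating the time primitive representation of `u` under the integral sign. -/
private lemma aux_uxt (T : ℝ) (hT : 0 < T)
    (u ux ut utx : ℝ → ℝ → ℝ)
    (hux : ∀ (x : ℝ), ∀ t ∈ Set.Ico (0:ℝ) T, HasDerivAt (fun x' => u x' t) (ux x t) x)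
    (hut : ∀ (x : ℝ), ∀ t ∈ Set.Ico (0:ℝ) T,
      HasDerivWithinAt (fun t' => u x t') (ut x t) (Set.Ico (0:ℝ) T) t)
    (hutx : ∀ (x : ℝ), ∀ t ∈ Set.Ico (0:ℝ) T, HasDerivAt (fun x' => ut x' t) (utx x t) x)
    (cu : ContinuousOn (fun p : ℝ × ℝ => u p.1 p.2) (Set.univ ×ˢ Set.Ico (0:ℝ) T))
    (cut : ContinuousOn (fun p : ℝ × ℝ => ut p.1 p.2) (Set.univ ×ˢ Set.Ico (0:ℝ) T))
    (cutx : ContinuousOn (fun p : ℝ × ℝ => utx p.1 p.2) (Set.univ ×ˢ Set.Ico (0:ℝ) T)) :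
    ∀ (x : ℝ), ∀ t ∈ Set.Ico (0:ℝ) T,
      HasDerivWithinAt (fun τ => ux x τ) (utx x t) (Set.Ici t) t := by
  -- Step a: time FTC for u
  have hA : ∀ (y : ℝ), ∀ t' ∈ Set.Ico (0:ℝ) T, u y t' - u y 0 = ∫ τ in (0:ℝ)..t', ut y τ := by
    intro y t' ht'
    have hIcc : Set.Icc (0:ℝ) t' ⊆ Set.Ico 0 T := fun s hs => ⟨hs.1, lt_of_le_of_lt hs.2 ht'.2⟩
    have hcont : ContinuousOn (fun τ => u y τ) (Set.Icc 0 t') := (aux_sliceT cu y).mono hIcc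
    have hderiv : ∀ τ ∈ Set.Ioo (0:ℝ) t',
        HasDerivWithinAt (fun τ' => u y τ') (ut y τ) (Set.Ioi τ) τ := by
      intro τ hτ
      have hτI : τ ∈ Set.Ico (0:ℝ) T := ⟨le_of_lt hτ.1, lt_trans hτ.2 ht'.2⟩
      exact (hut y τ hτI).mono_of_mem_nhdsWithin (aux_memIoi hτI.1 hτI.2)
    have hint : IntervalIntegrable (fun τ => ut y τ) volume 0 t' := by
      apply ContinuousOn.intervalIntegrable
      rw [Set.uIcc_of_le ht'.1]
      exact (aux_sliceT cut y).mono hIcc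
    exact (intervalIntegral.integral_eq_sub_of_hasDeriv_right_of_le ht'.1 hcont hderiv hint).symm
  -- Step b: differentiate under the time integral
  have hkey : ∀ (x : ℝ), ∀ t' ∈ Set.Ico (0:ℝ) T,
      ux x t' - ux x 0 = ∫ τ in (0:ℝ)..t', utx x τ := by
    intro x t' ht'
    have hIcc : Set.Icc (0:ℝ) t' ⊆ Set.Ico 0 T := fun s hs => ⟨hs.1, lt_of_le_of_lt hs.2 ht'.2⟩
    have hIoc : Set.Ioc (0:ℝ) t' ⊆ Set.Ico 0 T :=
      fun s hs => ⟨le_of_lt hs.1, lt_of_le_of_lt hs.2 ht'.2⟩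
    have hIocm : Set.uIoc (0:ℝ) t' = Set.Ioc (0:ℝ) t' := Set.uIoc_of_le ht'.1
    obtain ⟨C, hC⟩ := IsCompact.exists_bound_of_continuousOn
      ((isCompact_Icc (a := x - 1) (b := x + 1)).prod (isCompact_Icc (a := (0:ℝ)) (b := t')))
      (cutx.mono (Set.prod_mono (Set.subset_univ _) hIcc))
    have hBder : HasDerivAt (fun y => ∫ τ in (0:ℝ)..t', ut y τ)
        (∫ τ in (0:ℝ)..t', utx x τ) x := by
      refine (intervalIntegral.hasDerivAt_integral_of_dominated_loc_of_deriv_le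
        (F := fun y τ => ut y τ) (F' := fun y τ => utx y τ) (bound := fun _ => C)
        (Metric.ball_mem_nhds x one_pos) ?_ ?_ ?_ ?_ ?_ ?_).2
      · refine Filter.Eventually.of_forall fun y => ?_
        rw [hIocm]
        exact ((aux_sliceT cut y).mono hIoc).aestronglyMeasurable measurableSet_Ioc
      · apply ContinuousOn.intervalIntegrable
        rw [Set.uIcc_of_le ht'.1]
        exact (aux_sliceT cut x).mono hIcc
      · rw [hIocm]
        exact ((aux_sliceT cutx x).mono hIoc).aestronglyMeasurable measurableSet_Ioc
      · refine Filter.Eventually.of_forall fun τ hτ y hy => ?_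
        rw [hIocm] at hτ
        refine hC (y, τ) ⟨?_, Set.Ioc_subset_Icc_self hτ⟩
        have : |y - x| < 1 := by simpa [Real.dist_eq] using hy
        constructor <;> [linarith [abs_lt.1 this]; linarith [abs_lt.1 this]]
      · exact intervalIntegrable_const
      · refine Filter.Eventually.of_forall fun τ hτ y _ => ?_
        rw [hIocm] at hτ
        exact hutx y τ (hIoc hτ)
    have hfun : (fun y => ∫ τ in (0:ℝ)..t', ut y τ) = fun y => u y t' - u y 0 :=
      funext fun y => (hA y t' ht').symm
    rw [hfun] at hBder
    have h2 : HasDerivAt (fun y => u y t' - u y 0) (ux x t' - ux x 0) x :=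
      (hux x t' ht').sub (hux x 0 ⟨le_refl 0, hT⟩)
    exact h2.unique hBder
  -- Step c: FTC-1 in time on the primitive representation
  intro x t ht
  have hIcc : Set.Icc (0:ℝ) t ⊆ Set.Ico 0 T := fun s hs => ⟨hs.1, lt_of_le_of_lt hs.2 ht.2⟩
  have hmemIci := aux_memIci ht.1 ht.2
  have hmemIoi := aux_memIoi ht.1 ht.2
  have hprim : HasDerivWithinAt (fun τ => ux x 0 + ∫ s in (0:ℝ)..τ, utx x s)
      (utx x t) (Set.Ici t) t := by
    have hint : IntervalIntegrable (fun s => utx x s) volume 0 t := by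
      apply ContinuousOn.intervalIntegrable
      rw [Set.uIcc_of_le ht.1]
      exact (aux_sliceT cutx x).mono hIcc
    have hmeas : StronglyMeasurableAtFilter (fun s => utx x s) (nhdsWithin t (Set.Ioi t)) volume :=
      ⟨Set.Ico 0 T, hmemIoi, (aux_sliceT cutx x).aestronglyMeasurable measurableSet_Ico⟩
    have hcw : ContinuousWithinAt (fun s => utx x s) (Set.Ioi t) t :=
      ((aux_sliceT cutx x) t ht).mono_of_mem_nhdsWithin hmemIoi
    exact (intervalIntegral.integral_hasDerivWithinAt_right hint hmeas hcw).const_add (ux x 0)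
  have hEq : (fun τ => ux x τ) =ᶠ[nhdsWithin t (Set.Ici t)]
      (fun τ => ux x 0 + ∫ s in (0:ℝ)..τ, utx x s) := by
    filter_upwards [hmemIci] with τ hτ
    have := hkey x τ hτ
    linarith
  have hx0 : ux x t = ux x 0 + ∫ s in (0:ℝ)..t, utx x s := by
    have := hkey x t ht
    linarith
  exact hprim.congr_of_eventuallyEq hEq hx0

/-- Main computation: energy conservation given the two previous lemmas, via the
fundamental theorem of calculus in time and Fubini. -/
private lemma aux_main (μ T : ℝ) (hT : 0 < T)
    (u ux uxx ut utx : ℝ → ℝ → ℝ)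
    (cu : ContinuousOn (fun p : ℝ × ℝ => u p.1 p.2) (Set.univ ×ˢ Set.Ico (0:ℝ) T))
    (cux : ContinuousOn (fun p : ℝ × ℝ => ux p.1 p.2) (Set.univ ×ˢ Set.Ico (0:ℝ) T))
    (cut : ContinuousOn (fun p : ℝ × ℝ => ut p.1 p.2) (Set.univ ×ˢ Set.Ico (0:ℝ) T))
    (cutx : ContinuousOn (fun p : ℝ × ℝ => utx p.1 p.2) (Set.univ ×ˢ Set.Ico (0:ℝ) T))
    (hux : ∀ (x : ℝ), ∀ t ∈ Set.Ico (0:ℝ) T, HasDerivAt (fun x' => u x' t) (ux x t) x)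
    (huxx : ∀ (x : ℝ), ∀ t ∈ Set.Ico (0:ℝ) T, HasDerivAt (fun x' => ux x' t) (uxx x t) x)
    (hut : ∀ (x : ℝ), ∀ t ∈ Set.Ico (0:ℝ) T,
      HasDerivWithinAt (fun t' => u x t') (ut x t) (Set.Ico (0:ℝ) T) t)
    (huxt : ∀ (x : ℝ), ∀ t ∈ Set.Ico (0:ℝ) T,
      HasDerivWithinAt (fun τ => ux x τ) (utx x t) (Set.Ici t) t)
    (hzero : ∀ τ ∈ Set.Ico (0:ℝ) T,
      ∫ x in (0:ℝ)..1, (u x τ * ut x τ + (μ/12) * (ux x τ * utx x τ)) = 0) :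
    ∀ t ∈ Set.Ico (0:ℝ) T,
      (1/2) * (∫ x in (0:ℝ)..1, ((u x t)^2 + (μ/12) * (ux x t)^2))
        = (1/2) * (∫ x in (0:ℝ)..1, ((u x 0)^2 + (μ/12) * (ux x 0)^2)) := by
  intro t ht
  set q : ℝ → ℝ → ℝ := fun x τ => 2 * u x τ * ut x τ + (μ/12) * (2 * ux x τ * utx x τ) with hq
  have h0T : (0:ℝ) ∈ Set.Ico (0:ℝ) T := ⟨le_refl 0, hT⟩
  have hIcc : Set.Icc (0:ℝ) t ⊆ Set.Ico 0 T := fun s hs => ⟨hs.1, lt_of_le_of_lt hs.2 ht.2⟩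
  -- time FTC for the energy density
  have hP : ∀ x : ℝ, ((u x t)^2 + (μ/12) * (ux x t)^2) - ((u x 0)^2 + (μ/12) * (ux x 0)^2)
      = ∫ τ in (0:ℝ)..t, q x τ := by
    intro x
    have hcont : ContinuousOn (fun τ => (u x τ)^2 + (μ/12) * (ux x τ)^2) (Set.Icc 0 t) :=
      (((aux_sliceT cu x).mono hIcc).pow 2).add
        (continuousOn_const.mul (((aux_sliceT cux x).mono hIcc).pow 2))
    have hderiv : ∀ τ ∈ Set.Ioo (0:ℝ) t,
        HasDerivWithinAt (fun τ' => (u x τ')^2 + (μ/12) * (ux x τ')^2) (q x τ)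
          (Set.Ioi τ) τ := by
      intro τ hτ
      have hτI : τ ∈ Set.Ico (0:ℝ) T := ⟨le_of_lt hτ.1, lt_trans hτ.2 ht.2⟩
      have dU : HasDerivWithinAt (fun τ' => u x τ') (ut x τ) (Set.Ioi τ) τ :=
        (hut x τ hτI).mono_of_mem_nhdsWithin (aux_memIoi hτI.1 hτI.2)
      have dUX : HasDerivWithinAt (fun τ' => ux x τ') (utx x τ) (Set.Ioi τ) τ :=
        (huxt x τ hτI).mono Set.Ioi_subset_Ici_self
      have h0 := (dU.pow 2).add ((dUX.pow 2).const_mul (μ/12))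
      refine h0.congr_deriv ?_
      symm
      rw [hq]
      push_cast
      ring
    have hint : IntervalIntegrable (fun τ => q x τ) volume 0 t := by
      apply ContinuousOn.intervalIntegrable
      rw [Set.uIcc_of_le ht.1]
      exact ((continuousOn_const.mul ((aux_sliceT cu x).mono hIcc)).mul
          ((aux_sliceT cut x).mono hIcc)).add
        (continuousOn_const.mul ((continuousOn_const.mul ((aux_sliceT cux x).mono hIcc)).mul
          ((aux_sliceT cutx x).mono hIcc)))
    exact (intervalIntegral.integral_eq_sub_of_hasDeriv_right_of_le ht.1 hcont hderiv hint).symm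
  -- integrability in x of the energy density at fixed times
  have cxCont : ∀ s ∈ Set.Ico (0:ℝ) T, Continuous fun x => (u x s)^2 + (μ/12) * (ux x s)^2 := by
    intro s hs
    have c1 : Continuous fun x => u x s := by
      rw [continuous_iff_continuousAt]; exact fun x => (hux x s hs).continuousAt
    have c2 : Continuous fun x => ux x s := by
      rw [continuous_iff_continuousAt]; exact fun x => (huxx x s hs).continuousAt
    exact (c1.pow 2).add (continuous_const.mul (c2.pow 2))
  -- key computation
  have key : (∫ x in (0:ℝ)..1, ((u x t)^2 + (μ/12) * (ux x t)^2))
      - (∫ x in (0:ℝ)..1, ((u x 0)^2 + (μ/12) * (ux x 0)^2)) = 0 := by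
    rw [← intervalIntegral.integral_sub ((cxCont t ht).intervalIntegrable 0 1)
      ((cxCont 0 h0T).intervalIntegrable 0 1)]
    rw [intervalIntegral.integral_congr (g := fun x => ∫ τ in (0:ℝ)..t, q x τ)
      (fun x _ => hP x)]
    -- Fubini
    have hqc : ContinuousOn (Function.uncurry q) (Set.Icc (0:ℝ) 1 ×ˢ Set.Icc (0:ℝ) t) := by
      have hsub : Set.Icc (0:ℝ) 1 ×ˢ Set.Icc (0:ℝ) t ⊆ Set.univ ×ˢ Set.Ico (0:ℝ) T :=
        Set.prod_mono (Set.subset_univ _) hIcc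
      exact ((continuousOn_const.mul (cu.mono hsub)).mul (cut.mono hsub)).add
        (continuousOn_const.mul ((continuousOn_const.mul (cux.mono hsub)).mul (cutx.mono hsub)))
    have hInt : Integrable (Function.uncurry q)
        ((volume.restrict (Set.Ioc (0:ℝ) 1)).prod (volume.restrict (Set.Ioc (0:ℝ) t))) := by
      rw [MeasureTheory.Measure.prod_restrict, ← MeasureTheory.Measure.volume_eq_prod ℝ ℝ]
      exact (hqc.integrableOn_compact (isCompact_Icc.prod isCompact_Icc)).mono_set
        (Set.prod_mono Set.Ioc_subset_Icc_self Set.Ioc_subset_Icc_self)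
    have hswap := MeasureTheory.integral_integral_swap hInt
    rw [intervalIntegral.integral_of_le (zero_le_one)]
    simp only [intervalIntegral.integral_of_le ht.1]
    rw [hswap]
    rw [MeasureTheory.setIntegral_congr_fun measurableSet_Ioc
      (g := fun _ => (0:ℝ)) ?_]
    · simp
    · intro τ hτ
      have hτI : τ ∈ Set.Ico (0:ℝ) T := ⟨le_of_lt hτ.1, lt_of_le_of_lt hτ.2 ht.2⟩
      have h0 := hzero τ hτI
      calc (∫ x in Set.Ioc (0:ℝ) 1, q x τ)
          = ∫ x in (0:ℝ)..1, q x τ := (intervalIntegral.integral_of_le zero_le_one).symm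
        _ = 2 * ∫ x in (0:ℝ)..1, (u x τ * ut x τ + (μ/12) * (ux x τ * utx x τ)) := by
            rw [← intervalIntegral.integral_const_mul]
            apply intervalIntegral.integral_congr
            intro x _
            rw [hq]; ring
        _ = 0 := by rw [h0]; ring
  linarith

/-- A classical 1-periodic solution of the moderate-amplitude surface wave equation
`u_t + u_x + (3/2)ε u u_x - (3/8)ε² u² u_x + (3/16)ε³ u³ u_x + (μ/12)(u_{xxx} - u_{xxt})
 + (7εμ/24)(u u_{xxx} + 2 u_x u_{xx}) = 0` on `ℝ × [0,T)`, recorded together with all the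
partial derivatives appearing in the equation. -/
structure ClassicalSol (ε μ T : ℝ) where
  u : ℝ → ℝ → ℝ
  ux : ℝ → ℝ → ℝ
  uxx : ℝ → ℝ → ℝ
  uxxx : ℝ → ℝ → ℝ
  ut : ℝ → ℝ → ℝ
  utx : ℝ → ℝ → ℝ
  utxx : ℝ → ℝ → ℝ
  periodic : ∀ t ∈ Set.Ico (0:ℝ) T, Function.Periodic (fun x => u x t) 1
  hux : ∀ (x : ℝ), ∀ t ∈ Set.Ico (0:ℝ) T, HasDerivAt (fun x' => u x' t) (ux x t) x
  huxx : ∀ (x : ℝ), ∀ t ∈ Set.Ico (0:ℝ) T, HasDerivAt (fun x' => ux x' t) (uxx x t) x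
  huxxx : ∀ (x : ℝ), ∀ t ∈ Set.Ico (0:ℝ) T, HasDerivAt (fun x' => uxx x' t) (uxxx x t) x
  hut : ∀ (x : ℝ), ∀ t ∈ Set.Ico (0:ℝ) T,
    HasDerivWithinAt (fun t' => u x t') (ut x t) (Set.Ico (0:ℝ) T) t
  hutx : ∀ (x : ℝ), ∀ t ∈ Set.Ico (0:ℝ) T, HasDerivAt (fun x' => ut x' t) (utx x t) x
  hutxx : ∀ (x : ℝ), ∀ t ∈ Set.Ico (0:ℝ) T, HasDerivAt (fun x' => utx x' t) (utxx x t) x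
  contu : ContinuousOn (fun p : ℝ × ℝ => u p.1 p.2) (Set.univ ×ˢ Set.Ico (0:ℝ) T)
  contux : ContinuousOn (fun p : ℝ × ℝ => ux p.1 p.2) (Set.univ ×ˢ Set.Ico (0:ℝ) T)
  contuxx : ContinuousOn (fun p : ℝ × ℝ => uxx p.1 p.2) (Set.univ ×ˢ Set.Ico (0:ℝ) T)
  contuxxx : ContinuousOn (fun p : ℝ × ℝ => uxxx p.1 p.2) (Set.univ ×ˢ Set.Ico (0:ℝ) T)
  contut : ContinuousOn (fun p : ℝ × ℝ => ut p.1 p.2) (Set.univ ×ˢ Set.Ico (0:ℝ) T)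
  contutx : ContinuousOn (fun p : ℝ × ℝ => utx p.1 p.2) (Set.univ ×ˢ Set.Ico (0:ℝ) T)
  contutxx : ContinuousOn (fun p : ℝ × ℝ => utxx p.1 p.2) (Set.univ ×ˢ Set.Ico (0:ℝ) T)
  eqn : ∀ (x : ℝ), ∀ t ∈ Set.Ico (0:ℝ) T,
    ut x t + ux x t + (3/2) * ε * u x t * ux x t - (3/8) * ε^2 * (u x t)^2 * ux x t
      + (3/16) * ε^3 * (u x t)^3 * ux x t + (μ/12) * (uxxx x t - utxx x t)
      + (7 * ε * μ / 24) * (u x t * uxxx x t + 2 * ux x t * uxx x t) = 0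

/-- The energy `E(t) = (1/2)∫₀¹ (u² + (μ/12)u_x²) dx` is conserved for classical
1-periodic solutions of the moderate-amplitude surface wave equation. -/
theorem stmt4 (ε μ T : ℝ) (hε : 0 < ε) (hμ : 0 < μ) (hT : 0 < T)
    (sol : ClassicalSol ε μ T) :
    ∀ t ∈ Set.Ico (0:ℝ) T,
      (1/2) * (∫ x in (0:ℝ)..1, ((sol.u x t)^2 + (μ/12) * (sol.ux x t)^2))
        = (1/2) * (∫ x in (0:ℝ)..1, ((sol.u x 0)^2 + (μ/12) * (sol.ux x 0)^2)) := by
  obtain ⟨u, ux, uxx, uxxx, ut, utx, utxx, hper, hux, huxx, huxxx, hut, hutx, hutxx,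
    cu, cux, cuxx, cuxxx, cut, cutx, cutxx, heqn⟩ := sol
  exact aux_main μ T hT u ux uxx ut utx cu cux cut cutx hux huxx hut
    (aux_uxt T hT u ux ut utx hux hut hutx cu cut cutx)
    (aux_zero ε μ T u ux uxx uxxx ut utx utxx hper hux huxx huxxx hut hutx hutxx heqn)
end

section
/- Let u be a classical 1-periodic solution of the moderate-amplitude surface wave equation on [0,T). Then for every t ∈ [0,T), (1/2)·d/dt ∫₀¹ (u_x² + (μ/12)·u_{xx}²) dx = ∫₀¹ ( (3/2)ε u u_x u_{xx} − (3/8)ε² u² u_x u_{xx} + (3/16)ε³ u³ u_x u_{xx} + (7εμ/24)(u u_{xx} u_{xxx} + 2 u_x u_{xx}²) ) dx. -/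
open MeasureTheory Set Filter intervalIntegral
open scoped Topology Interval

namespace SWaux

variable {T : ℝ}

lemma contx {f : ℝ → ℝ → ℝ}
    (hf : ContinuousOn (fun p : ℝ × ℝ => f p.1 p.2) (Set.univ ×ˢ Set.Ico (0:ℝ) T))
    {t : ℝ} (ht : t ∈ Set.Ico (0:ℝ) T) : Continuous (fun x => f x t) :=
  hf.comp_continuous (continuous_id.prodMk continuous_const) (fun _ => ⟨trivial, ht⟩)

lemma contt {f : ℝ → ℝ → ℝ}
    (hf : ContinuousOn (fun p : ℝ × ℝ => f p.1 p.2) (Set.univ ×ˢ Set.Ico (0:ℝ) T))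
    (x : ℝ) : ContinuousOn (fun s => f x s) (Set.Ico (0:ℝ) T) :=
  hf.comp ((continuous_const.prodMk continuous_id).continuousOn)
    (fun s hs => ⟨trivial, hs⟩)

/-- One-sided/two-sided FTC within `Ico 0 T`. -/
lemma ftc_within {f : ℝ → ℝ} (hf : ContinuousOn f (Set.Ico 0 T))
    {t : ℝ} (ht : t ∈ Set.Ico (0:ℝ) T) :
    HasDerivWithinAt (fun τ => ∫ s in (0:ℝ)..τ, f s) (f t) (Set.Ico (0:ℝ) T) t := by
  obtain ⟨ht0, htT⟩ := ht
  have hint : IntervalIntegrable f volume 0 t := by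
    apply ContinuousOn.intervalIntegrable
    apply hf.mono
    rw [Set.uIcc_of_le ht0]
    exact fun s hs => ⟨hs.1, lt_of_le_of_lt hs.2 htT⟩
  have hR : HasDerivWithinAt (fun τ => ∫ s in (0:ℝ)..τ, f s) (f t) (Set.Ici t) t := by
    have hmeas : StronglyMeasurableAtFilter f (𝓝[>] t) volume := by
      refine ⟨Set.Ioo t T, ?_, (hf.mono (fun s hs => ⟨le_trans ht0 hs.1.le, hs.2⟩)).aestronglyMeasurable measurableSet_Ioo⟩
      exact mem_nhdsWithin.2 ⟨Set.Iio T, isOpen_Iio, htT, fun s hs => ⟨hs.2, hs.1⟩⟩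
    have hcont : ContinuousWithinAt f (Set.Ioi t) t := by
      have h1 : ContinuousWithinAt f (Set.Ioi t ∩ Set.Iio T) t :=
        (hf t ⟨ht0, htT⟩).mono (fun s hs => ⟨le_trans ht0 hs.1.le, hs.2⟩)
      exact (continuousWithinAt_inter (Iio_mem_nhds htT)).mp h1
    exact intervalIntegral.integral_hasDerivWithinAt_right hint hmeas hcont
  rcases eq_or_lt_of_le ht0 with h0 | h0
  · exact hR.mono (fun s hs => by simpa [← h0] using hs.1)
  · have hL : HasDerivWithinAt (fun τ => ∫ s in (0:ℝ)..τ, f s) (f t) (Set.Iic t) t := by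
      have hmeas : StronglyMeasurableAtFilter f (𝓝[≤] t) volume := by
        refine ⟨Set.Ioc 0 t, ?_, (hf.mono (fun s hs => ⟨hs.1.le, lt_of_le_of_lt hs.2 htT⟩)).aestronglyMeasurable measurableSet_Ioc⟩
        exact mem_nhdsWithin.2 ⟨Set.Ioi 0, isOpen_Ioi, h0, fun s hs => ⟨hs.1, hs.2⟩⟩
      have hcont : ContinuousWithinAt f (Set.Iic t) t := by
        have h1 : ContinuousWithinAt f (Set.Iic t ∩ Set.Ioi 0) t :=
          (hf t ⟨ht0, htT⟩).mono (fun s hs => ⟨hs.2.le, lt_of_le_of_lt hs.1 htT⟩)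
        exact (continuousWithinAt_inter (Ioi_mem_nhds h0)).mp h1
      exact intervalIntegral.integral_hasDerivWithinAt_right hint hmeas hcont
    have := hR.union hL
    exact this.mono (fun s _ => by rcases le_total t s with h | h; exacts [Or.inl h, Or.inr h])

/-- FTC-2 on `[a,b] ⊆ [0,T)` for a function with one-sided derivative within `Ico 0 T`. -/
lemma ftc2 {a b : ℝ} {f f' : ℝ → ℝ} (hab : a ≤ b) (ha : 0 ≤ a) (hbT : b < T)
    (hd : ∀ s ∈ Set.Ico (0:ℝ) T, HasDerivWithinAt f (f' s) (Set.Ico (0:ℝ) T) s)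
    (hcont : ContinuousOn f (Set.Ico 0 T)) (hcont' : ContinuousOn f' (Set.Ico 0 T)) :
    ∫ s in a..b, f' s = f b - f a := by
  have hIcc : Set.Icc a b ⊆ Set.Ico 0 T :=
    fun s hs => ⟨le_trans ha hs.1, lt_of_le_of_lt hs.2 hbT⟩
  refine intervalIntegral.integral_eq_sub_of_hasDeriv_right_of_le hab (hcont.mono hIcc)
    (fun s hs => ?_) ((hcont'.mono (by rw [Set.uIcc_of_le hab]; exact hIcc)).intervalIntegrable)
  have h0s : 0 < s := lt_of_le_of_lt ha hs.1
  have hsT : s < T := lt_trans hs.2 hbT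
  have : HasDerivAt f (f' s) s :=
    (hd s ⟨h0s.le, hsT⟩).hasDerivAt
      (Filter.mem_of_superset (Ioo_mem_nhds h0s hsT) Set.Ioo_subset_Ico_self)
  exact this.hasDerivWithinAt

lemma periodic_deriv {f f' : ℝ → ℝ} (hf : Function.Periodic f 1)
    (hd : ∀ x, HasDerivAt f (f' x) x) : Function.Periodic f' 1 := by
  intro x
  have h1 : HasDerivAt (fun x' => f (x' + 1)) (f' (x + 1)) x := by
    exact ((hd (x + 1)).comp x ((hasDerivAt_id x).add_const 1)).congr_deriv (mul_one _)
  have h2 : (fun x' : ℝ => f (x' + 1)) = f := funext fun y => hf y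
  rw [h2] at h1
  exact h1.unique (hd x)

/-- Clairaut-type lemma: if `w` is the time derivative of `v`, and `vx`, `wx` are the
space derivatives of `v`, `w`, then `wx` is the time derivative of `vx`. -/
lemma deriv_swap (hT : 0 < T) (v vx w wx : ℝ → ℝ → ℝ)
    (hvx : ∀ x, ∀ t ∈ Set.Ico (0:ℝ) T, HasDerivAt (fun x' => v x' t) (vx x t) x)
    (hvt : ∀ x, ∀ t ∈ Set.Ico (0:ℝ) T,
      HasDerivWithinAt (fun t' => v x t') (w x t) (Set.Ico (0:ℝ) T) t)
    (hwx : ∀ x, ∀ t ∈ Set.Ico (0:ℝ) T, HasDerivAt (fun x' => w x' t) (wx x t) x)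
    (contv : ContinuousOn (fun p : ℝ × ℝ => v p.1 p.2) (Set.univ ×ˢ Set.Ico (0:ℝ) T))
    (contw : ContinuousOn (fun p : ℝ × ℝ => w p.1 p.2) (Set.univ ×ˢ Set.Ico (0:ℝ) T))
    (contwx : ContinuousOn (fun p : ℝ × ℝ => wx p.1 p.2) (Set.univ ×ˢ Set.Ico (0:ℝ) T)) :
    ∀ x, ∀ t ∈ Set.Ico (0:ℝ) T,
      HasDerivWithinAt (fun τ => vx x τ) (wx x t) (Set.Ico (0:ℝ) T) t := by
  intro x t ht
  have key : ∀ τ ∈ Set.Ico (0:ℝ) T, ∫ s in (0:ℝ)..τ, wx x s = vx x τ - vx x 0 := by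
    intro τ hτ
    obtain ⟨hτ0, hτT⟩ := hτ
    have hIoc : Set.Ioc (0:ℝ) τ ⊆ Set.Ico 0 T := fun s hs => ⟨hs.1.le, lt_of_le_of_lt hs.2 hτT⟩
    have hIcc : Set.Icc (0:ℝ) τ ⊆ Set.Ico 0 T := fun s hs => ⟨hs.1, lt_of_le_of_lt hs.2 hτT⟩
    have huIoc : Ι (0:ℝ) τ = Set.Ioc 0 τ := Set.uIoc_of_le hτ0
    obtain ⟨C, hC⟩ := (((isCompact_Icc (a := x-1) (b := x+1)).prod
        (isCompact_Icc (a := (0:ℝ)) (b := τ)))).exists_bound_of_continuousOn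
      (contwx.mono (fun p hp => ⟨trivial, hIcc hp.2⟩))
    have hmeas : ∀ x' : ℝ, AEStronglyMeasurable (fun s => w x' s)
        (volume.restrict (Ι (0:ℝ) τ)) := by
      intro x'
      rw [huIoc]
      exact ((contt contw x').mono hIoc).aestronglyMeasurable measurableSet_Ioc
    have hmeas' : AEStronglyMeasurable (fun s => wx x s) (volume.restrict (Ι (0:ℝ) τ)) := by
      rw [huIoc]; exact ((contt contwx x).mono hIoc).aestronglyMeasurable measurableSet_Ioc
    have hint : IntervalIntegrable (fun s => w x s) volume 0 τ :=
      (((contt contw x).mono (by rw [Set.uIcc_of_le hτ0]; exact hIcc))).intervalIntegrable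
    have hbound : ∀ᵐ s ∂volume, s ∈ Ι (0:ℝ) τ → ∀ x' ∈ Metric.ball x 1, ‖wx x' s‖ ≤ C := by
      refine Filter.Eventually.of_forall (fun s hs x' hx' => hC (x', s) ?_)
      rw [huIoc] at hs
      rw [Metric.mem_ball, Real.dist_eq, abs_lt] at hx'
      exact ⟨⟨by linarith [hx'.1], by linarith [hx'.2]⟩, ⟨hs.1.le, hs.2⟩⟩
    have hdiff : ∀ᵐ s ∂volume, s ∈ Ι (0:ℝ) τ → ∀ x' ∈ Metric.ball x 1,
        HasDerivAt (fun y => w y s) (wx x' s) x' := by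
      refine Filter.Eventually.of_forall (fun s hs x' _ => ?_)
      rw [huIoc] at hs
      exact hwx x' s (hIoc hs)
    have hpar := (intervalIntegral.hasDerivAt_integral_of_dominated_loc_of_deriv_le (Metric.ball_mem_nhds x one_pos)
      (Filter.Eventually.of_forall hmeas) hint hmeas' hbound
      intervalIntegrable_const hdiff).2
    have heq : (fun x' => ∫ s in (0:ℝ)..τ, w x' s) = fun x' => v x' τ - v x' 0 := by
      funext x'
      exact ftc2 hτ0 le_rfl hτT (fun s hs => hvt x' s hs) (contt contv x') (contt contw x')
    rw [heq] at hpar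
    exact hpar.unique ((hvx x τ ⟨hτ0, hτT⟩).sub (hvx x 0 ⟨le_rfl, hT⟩))
  have hG : HasDerivWithinAt (fun τ => vx x 0 + ∫ s in (0:ℝ)..τ, wx x s) (wx x t)
      (Set.Ico (0:ℝ) T) t :=
    (ftc_within (contt contwx x) ht).const_add (vx x 0)
  refine hG.congr (fun τ hτ => ?_) ?_
  · rw [key τ hτ]; ring
  · rw [key t ht]; ring

end SWaux

set_option maxHeartbeats 1000000 in
open MeasureTheory Set Filter intervalIntegral in
open scoped Topology Interval in
/-- Spatial integration by parts at a fixed time: the energy flux identity. -/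
lemma SWaux.partB (ε μ T : ℝ) (sol : ClassicalSol ε μ T) {t : ℝ}
    (ht : t ∈ Set.Ico (0:ℝ) T) :
    ∫ x in (0:ℝ)..1,
        (sol.ux x t * sol.utx x t + (μ/12) * (sol.uxx x t * sol.utxx x t))
      = ∫ x in (0:ℝ)..1,
          ((3/2) * ε * sol.u x t * sol.ux x t * sol.uxx x t
            - (3/8) * ε^2 * (sol.u x t)^2 * sol.ux x t * sol.uxx x t
            + (3/16) * ε^3 * (sol.u x t)^3 * sol.ux x t * sol.uxx x t
            + (7 * ε * μ / 24) * (sol.u x t * sol.uxx x t * sol.uxxx x t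
                + 2 * sol.ux x t * (sol.uxx x t)^2)) := by
  -- continuity in x at time t
  have Cu : Continuous fun x => sol.u x t := SWaux.contx sol.contu ht
  have Cux : Continuous fun x => sol.ux x t := SWaux.contx sol.contux ht
  have Cuxx : Continuous fun x => sol.uxx x t := SWaux.contx sol.contuxx ht
  have Cuxxx : Continuous fun x => sol.uxxx x t := SWaux.contx sol.contuxxx ht
  have Cut : Continuous fun x => sol.ut x t := SWaux.contx sol.contut ht
  have Cutx : Continuous fun x => sol.utx x t := SWaux.contx sol.contutx ht
  have Cutxx : Continuous fun x => sol.utxx x t := SWaux.contx sol.contutxx ht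
  -- periodicity of all spatial profiles
  have pu : Function.Periodic (fun x => sol.u x t) 1 := sol.periodic t ht
  have pux : Function.Periodic (fun x => sol.ux x t) 1 :=
    SWaux.periodic_deriv pu (fun x => sol.hux x t ht)
  have puxx : Function.Periodic (fun x => sol.uxx x t) 1 :=
    SWaux.periodic_deriv pux (fun x => sol.huxx x t ht)
  have put : Function.Periodic (fun x => sol.ut x t) 1 := by
    intro x
    have h1 : HasDerivWithinAt (fun t' => sol.u x t') (sol.ut (x+1) t)
        (Set.Ico (0:ℝ) T) t := by
      refine (sol.hut (x+1) t ht).congr (fun s hs => ?_) ?_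
      · exact (sol.periodic s hs x).symm
      · exact (sol.periodic t ht x).symm
    exact ((uniqueDiffOn_Ico 0 T) t ht).eq_deriv _ h1 (sol.hut x t ht)
  have putx : Function.Periodic (fun x => sol.utx x t) 1 :=
    SWaux.periodic_deriv put (fun x => sol.hutx x t ht)
  -- integrability
  have Ih : IntervalIntegrable
      (fun x => sol.ux x t * sol.utx x t + (μ/12) * (sol.uxx x t * sol.utxx x t))
      volume 0 1 :=
    ((Cux.mul Cutx).add (continuous_const.mul (Cuxx.mul Cutxx))).intervalIntegrable _ _
  have IR : IntervalIntegrable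
      (fun x => (3/2) * ε * sol.u x t * sol.ux x t * sol.uxx x t
          - (3/8) * ε^2 * (sol.u x t)^2 * sol.ux x t * sol.uxx x t
          + (3/16) * ε^3 * (sol.u x t)^3 * sol.ux x t * sol.uxx x t
          + (7 * ε * μ / 24) * (sol.u x t * sol.uxx x t * sol.uxxx x t
              + 2 * sol.ux x t * (sol.uxx x t)^2)) volume 0 1 := by
    apply Continuous.intervalIntegrable
    fun_prop
  rw [← sub_eq_zero, ← intervalIntegral.integral_sub Ih IR]
  -- the difference of the two integrands is the exact spatial derivative of Φ
  have hderiv : ∀ x ∈ Set.uIcc (0:ℝ) 1,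
      HasDerivAt (fun x' => sol.ux x' t * sol.ut x' t + (1/2) * (sol.ux x' t)^2
          + (μ/24) * (sol.uxx x' t)^2)
        ((sol.ux x t * sol.utx x t + (μ/12) * (sol.uxx x t * sol.utxx x t))
          - ((3/2) * ε * sol.u x t * sol.ux x t * sol.uxx x t
            - (3/8) * ε^2 * (sol.u x t)^2 * sol.ux x t * sol.uxx x t
            + (3/16) * ε^3 * (sol.u x t)^3 * sol.ux x t * sol.uxx x t
            + (7 * ε * μ / 24) * (sol.u x t * sol.uxx x t * sol.uxxx x t
                + 2 * sol.ux x t * (sol.uxx x t)^2))) x := by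
    intro x _
    have h1 := (((sol.huxx x t ht).mul (sol.hutx x t ht)).add
        (((sol.huxx x t ht).pow 2).const_mul ((1:ℝ)/2))).add
      (((sol.huxxx x t ht).pow 2).const_mul (μ/24))
    have heq := sol.eqn x t ht
    exact h1.congr_deriv (by
      push_cast
      linear_combination (sol.uxx x t) * heq)
  have hInt : IntervalIntegrable (fun x =>
      (sol.ux x t * sol.utx x t + (μ/12) * (sol.uxx x t * sol.utxx x t))
          - ((3/2) * ε * sol.u x t * sol.ux x t * sol.uxx x t
            - (3/8) * ε^2 * (sol.u x t)^2 * sol.ux x t * sol.uxx x t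
            + (3/16) * ε^3 * (sol.u x t)^3 * sol.ux x t * sol.uxx x t
            + (7 * ε * μ / 24) * (sol.u x t * sol.uxx x t * sol.uxxx x t
                + 2 * sol.ux x t * (sol.uxx x t)^2))) volume 0 1 := Ih.sub IR
  rw [intervalIntegral.integral_eq_sub_of_hasDerivAt hderiv hInt]
  have e1 : sol.ux 1 t = sol.ux 0 t := by simpa using pux 0
  have e2 : sol.ut 1 t = sol.ut 0 t := by simpa using put 0
  have e3 : sol.uxx 1 t = sol.uxx 0 t := by simpa using puxx 0
  rw [e1, e2, e3]
  ring

set_option maxHeartbeats 1000000 in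
/-- Differential identity for the higher-order energy: for every `t ∈ [0,T)`,
`(1/2) d/dt ∫₀¹ (u_x² + (μ/12)u_xx²) dx = ∫₀¹ ((3/2)ε u u_x u_xx - (3/8)ε² u² u_x u_xx
 + (3/16)ε³ u³ u_x u_xx + (7εμ/24)(u u_xx u_xxx + 2 u_x u_xx²)) dx`. -/
theorem stmt5 (ε μ T : ℝ) (hε : 0 < ε) (hμ : 0 < μ) (hT : 0 < T)
    (sol : ClassicalSol ε μ T) :
    ∀ t ∈ Set.Ico (0:ℝ) T,
      HasDerivWithinAt
        (fun τ => (1/2) * (∫ x in (0:ℝ)..1, ((sol.ux x τ)^2 + (μ/12) * (sol.uxx x τ)^2)))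
        (∫ x in (0:ℝ)..1,
          ((3/2) * ε * sol.u x t * sol.ux x t * sol.uxx x t
            - (3/8) * ε^2 * (sol.u x t)^2 * sol.ux x t * sol.uxx x t
            + (3/16) * ε^3 * (sol.u x t)^3 * sol.ux x t * sol.uxx x t
            + (7 * ε * μ / 24) * (sol.u x t * sol.uxx x t * sol.uxxx x t
                + 2 * sol.ux x t * (sol.uxx x t)^2)))
        (Set.Ico (0:ℝ) T) t := by
  intro t ht
  classical
  have hq2cont : ∀ (K : Set (ℝ × ℝ)), K ⊆ Set.univ ×ˢ Set.Ico (0:ℝ) T →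
      ContinuousOn (fun p : ℝ × ℝ => 2 * (sol.ux p.1 p.2 * sol.utx p.1 p.2
        + (μ/12) * (sol.uxx p.1 p.2 * sol.utxx p.1 p.2))) K := by
    intro K hK
    exact continuousOn_const.mul
      (((sol.contux.mono hK).mul (sol.contutx.mono hK)).add
        (continuousOn_const.mul ((sol.contuxx.mono hK).mul (sol.contutxx.mono hK))))
  -- time derivative of ux and uxx (Clairaut)
  have hux_t := SWaux.deriv_swap hT sol.u sol.ux sol.ut sol.utx
    sol.hux sol.hut sol.hutx sol.contu sol.contut sol.contutx
  have huxx_t := SWaux.deriv_swap hT sol.ux sol.uxx sol.utx sol.utxx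
    sol.huxx hux_t sol.hutxx sol.contux sol.contutx sol.contutxx
  -- the pointwise time derivative of the energy density
  have hg : ∀ x : ℝ, ∀ s ∈ Set.Ico (0:ℝ) T,
      HasDerivWithinAt (fun τ => (sol.ux x τ)^2 + (μ/12) * (sol.uxx x τ)^2)
        (2 * (sol.ux x s * sol.utx x s + (μ/12) * (sol.uxx x s * sol.utxx x s)))
        (Set.Ico (0:ℝ) T) s := by
    intro x s hs
    have h1 := ((hux_t x s hs).pow 2).add (((huxx_t x s hs).pow 2).const_mul (μ/12))
    exact h1.congr_deriv (by
      push_cast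
      ring)
  -- continuity in time of the energy density and its derivative
  have contg : ∀ x : ℝ, ContinuousOn (fun s => (sol.ux x s)^2 + (μ/12) * (sol.uxx x s)^2)
      (Set.Ico (0:ℝ) T) := fun x =>
    ((SWaux.contt sol.contux x).pow 2).add
      (continuousOn_const.mul ((SWaux.contt sol.contuxx x).pow 2))
  have contq : ∀ x : ℝ, ContinuousOn
      (fun s => 2 * (sol.ux x s * sol.utx x s + (μ/12) * (sol.uxx x s * sol.utxx x s)))
      (Set.Ico (0:ℝ) T) := fun x =>
    continuousOn_const.mul (((SWaux.contt sol.contux x).mul (SWaux.contt sol.contutx x)).add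
      (continuousOn_const.mul ((SWaux.contt sol.contuxx x).mul (SWaux.contt sol.contutxx x))))
  -- key identity: the energy as an integral in time of H
  have key : ∀ τ ∈ Set.Ico (0:ℝ) T,
      (1/2) * (∫ x in (0:ℝ)..1, ((sol.ux x τ)^2 + (μ/12) * (sol.uxx x τ)^2))
        = (1/2) * (∫ x in (0:ℝ)..1, ((sol.ux x 0)^2 + (μ/12) * (sol.uxx x 0)^2))
          + ∫ s in (0:ℝ)..τ, ∫ x in (0:ℝ)..1,
              (sol.ux x s * sol.utx x s + (μ/12) * (sol.uxx x s * sol.utxx x s)) := by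
    intro τ hτ
    obtain ⟨hτ0, hτT⟩ := hτ
    have h0T : (0:ℝ) ∈ Set.Ico (0:ℝ) T := ⟨le_rfl, hT⟩
    have step1 : ∀ x : ℝ, (sol.ux x τ)^2 + (μ/12) * (sol.uxx x τ)^2
        - ((sol.ux x 0)^2 + (μ/12) * (sol.uxx x 0)^2)
        = ∫ s in (0:ℝ)..τ,
            2 * (sol.ux x s * sol.utx x s + (μ/12) * (sol.uxx x s * sol.utxx x s)) := by
      intro x
      exact (SWaux.ftc2 hτ0 le_rfl hτT (fun s hs => hg x s hs) (contg x) (contq x)).symm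
    -- Fubini
    have hK : (Set.Icc (0:ℝ) 1 ×ˢ Set.Icc (0:ℝ) τ) ⊆ Set.univ ×ˢ Set.Ico (0:ℝ) T :=
      fun p hp => ⟨trivial, ⟨hp.2.1, lt_of_le_of_lt hp.2.2 hτT⟩⟩
    have hIntProd : Integrable
        (Function.uncurry (fun x s => 2 * (sol.ux x s * sol.utx x s
          + (μ/12) * (sol.uxx x s * sol.utxx x s))))
        ((volume.restrict (Set.Ioc (0:ℝ) 1)).prod (volume.restrict (Set.Ioc (0:ℝ) τ))) := by
      rw [MeasureTheory.Measure.prod_restrict]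
      exact MeasureTheory.IntegrableOn.mono_set
        ((hq2cont _ hK).integrableOn_compact (isCompact_Icc.prod isCompact_Icc))
        (Set.prod_mono Set.Ioc_subset_Icc_self Set.Ioc_subset_Icc_self)
    have hFub : ∫ x in (0:ℝ)..1, (∫ s in (0:ℝ)..τ,
          2 * (sol.ux x s * sol.utx x s + (μ/12) * (sol.uxx x s * sol.utxx x s)))
        = ∫ s in (0:ℝ)..τ, (∫ x in (0:ℝ)..1,
            2 * (sol.ux x s * sol.utx x s + (μ/12) * (sol.uxx x s * sol.utxx x s))) := by
      simp only [intervalIntegral.integral_of_le hτ0,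
        intervalIntegral.integral_of_le (zero_le_one' ℝ)]
      exact MeasureTheory.integral_integral_swap hIntProd
    -- put the pieces together
    have I1 : IntervalIntegrable (fun x => (sol.ux x τ)^2 + (μ/12) * (sol.uxx x τ)^2)
        volume 0 1 :=
      (((SWaux.contx sol.contux ⟨hτ0, hτT⟩).pow 2).add
        (continuous_const.mul ((SWaux.contx sol.contuxx ⟨hτ0, hτT⟩).pow 2))).intervalIntegrable _ _
    have I0 : IntervalIntegrable (fun x => (sol.ux x 0)^2 + (μ/12) * (sol.uxx x 0)^2)
        volume 0 1 :=
      (((SWaux.contx sol.contux h0T).pow 2).add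
        (continuous_const.mul ((SWaux.contx sol.contuxx h0T).pow 2))).intervalIntegrable _ _
    have hsub : (∫ x in (0:ℝ)..1, ((sol.ux x τ)^2 + (μ/12) * (sol.uxx x τ)^2))
        - (∫ x in (0:ℝ)..1, ((sol.ux x 0)^2 + (μ/12) * (sol.uxx x 0)^2))
        = ∫ x in (0:ℝ)..1, ((sol.ux x τ)^2 + (μ/12) * (sol.uxx x τ)^2
            - ((sol.ux x 0)^2 + (μ/12) * (sol.uxx x 0)^2)) :=
      (intervalIntegral.integral_sub I1 I0).symm
    have hcongr : ∫ x in (0:ℝ)..1, ((sol.ux x τ)^2 + (μ/12) * (sol.uxx x τ)^2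
            - ((sol.ux x 0)^2 + (μ/12) * (sol.uxx x 0)^2))
        = ∫ x in (0:ℝ)..1, (∫ s in (0:ℝ)..τ,
            2 * (sol.ux x s * sol.utx x s + (μ/12) * (sol.uxx x s * sol.utxx x s))) :=
      intervalIntegral.integral_congr (fun x _ => step1 x)
    have hlast : ∫ s in (0:ℝ)..τ, (∫ x in (0:ℝ)..1,
          2 * (sol.ux x s * sol.utx x s + (μ/12) * (sol.uxx x s * sol.utxx x s)))
        = 2 * ∫ s in (0:ℝ)..τ, (∫ x in (0:ℝ)..1,
            (sol.ux x s * sol.utx x s + (μ/12) * (sol.uxx x s * sol.utxx x s))) := by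
      simp_rw [intervalIntegral.integral_const_mul]
    have := hsub.trans (hcongr.trans (hFub.trans hlast))
    linarith [this]
  -- continuity of H
  have contH : ContinuousOn (fun s => ∫ x in (0:ℝ)..1,
      (sol.ux x s * sol.utx x s + (μ/12) * (sol.uxx x s * sol.utxx x s)))
      (Set.Ico (0:ℝ) T) := by
    intro s hs
    obtain ⟨hs0, hsT⟩ := hs
    have hsb' : s < (s + T)/2 := by linarith
    have hb'T : (s + T)/2 < T := by linarith
    have hK : (Set.Icc (0:ℝ) 1 ×ˢ Set.Icc (0:ℝ) ((s + T)/2)) ⊆ Set.univ ×ˢ Set.Ico (0:ℝ) T :=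
      fun p hp => ⟨trivial, ⟨hp.2.1, lt_of_le_of_lt hp.2.2 hb'T⟩⟩
    obtain ⟨C, hC⟩ := ((isCompact_Icc (a := (0:ℝ)) (b := 1)).prod
        (isCompact_Icc (a := (0:ℝ)) (b := (s + T)/2))).exists_bound_of_continuousOn
      (((sol.contux.mono hK).mul (sol.contutx.mono hK)).add
        (continuousOn_const.mul ((sol.contuxx.mono hK).mul (sol.contutxx.mono hK))))
    refine intervalIntegral.continuousWithinAt_of_dominated_interval
      (bound := fun _ => C) ?_ ?_ intervalIntegrable_const ?_
    · refine Filter.eventually_of_mem self_mem_nhdsWithin (fun τ hτ => ?_)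
      exact (((SWaux.contx sol.contux hτ).mul (SWaux.contx sol.contutx hτ)).add
        (continuous_const.mul ((SWaux.contx sol.contuxx hτ).mul
          (SWaux.contx sol.contutxx hτ)))).aestronglyMeasurable
    · have hmem : (Set.Ico (0:ℝ) T ∩ Set.Iic ((s + T)/2)) ∈ 𝓝[Set.Ico (0:ℝ) T] s :=
        Filter.inter_mem self_mem_nhdsWithin
          (mem_nhdsWithin_of_mem_nhds (Iic_mem_nhds hsb'))
      refine Filter.eventually_of_mem hmem (fun τ hτ => Filter.Eventually.of_forall
        (fun x hx => ?_))
      rw [Set.uIoc_of_le (zero_le_one' ℝ)] at hx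
      exact hC (x, τ) ⟨⟨hx.1.le, hx.2⟩, ⟨hτ.1.1, hτ.2⟩⟩
    · refine Filter.Eventually.of_forall (fun x _ => ?_)
      exact (((SWaux.contt sol.contux x).mul (SWaux.contt sol.contutx x)).add
        (continuousOn_const.mul ((SWaux.contt sol.contuxx x).mul
          (SWaux.contt sol.contutxx x)))) s ⟨hs0, hsT⟩
  -- main derivative statement
  have hmain : HasDerivWithinAt
      (fun τ => (1/2) * (∫ x in (0:ℝ)..1, ((sol.ux x τ)^2 + (μ/12) * (sol.uxx x τ)^2)))
      (∫ x in (0:ℝ)..1,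
        (sol.ux x t * sol.utx x t + (μ/12) * (sol.uxx x t * sol.utxx x t)))
      (Set.Ico (0:ℝ) T) t := by
    have hG := (SWaux.ftc_within contH ht).const_add
      ((1/2) * (∫ x in (0:ℝ)..1, ((sol.ux x 0)^2 + (μ/12) * (sol.uxx x 0)^2)))
    exact hG.congr (fun τ hτ => key τ hτ) (key t ht)
  rw [← SWaux.partB ε μ T sol ht]
  exact hmain
end

section
/- Let u be a classical 1-periodic solution of the moderate-amplitude surface wave equation on [0,T), and suppose there are constants M₀, M₁ ≥ 0 with |u(x,t)| ≤ M₀ and u_x(x,t) ≤ M₁ for all x ∈ [0,1], t ∈ [0,T). Define H(t) = (1/2)∫₀¹ (u² + (μ/6)·u_x² + (μ²/144)·u_{xx}²) dx. Then there is a constant K ≥ 0, depending only on ε, μ, M₀, M₁, such that H(t) ≤ H(0)·e^{K t} for all t ∈ [0,T). In particular, H remains bounded on any finite time interval on which the slope u_x is bounded above. -/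
open Set MeasureTheory Filter

namespace ClassicalSol
variable {ε μ T : ℝ} (sol : ClassicalSol ε μ T)

section Periodic
variable {t : ℝ} (ht : t ∈ Set.Ico (0:ℝ) T)

include ht in
lemma per_u (x : ℝ) : sol.u (x + 1) t = sol.u x t := sol.periodic t ht x

include ht in
lemma per_ux (x : ℝ) : sol.ux (x + 1) t = sol.ux x t := by
  have h := (sol.hux (x + 1) t ht).comp_add_const x 1
  have h2 : (fun x' => sol.u (x' + 1) t) = fun x' => sol.u x' t :=
    funext fun y => sol.periodic t ht y
  rw [h2] at h
  exact h.unique (sol.hux x t ht)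

include ht in
lemma per_uxx (x : ℝ) : sol.uxx (x + 1) t = sol.uxx x t := by
  have h := (sol.huxx (x + 1) t ht).comp_add_const x 1
  have h2 : (fun x' => sol.ux (x' + 1) t) = fun x' => sol.ux x' t :=
    funext fun y => sol.per_ux ht y
  rw [h2] at h
  exact h.unique (sol.huxx x t ht)

include ht in
lemma per_uxxx (x : ℝ) : sol.uxxx (x + 1) t = sol.uxxx x t := by
  have h := (sol.huxxx (x + 1) t ht).comp_add_const x 1
  have h2 : (fun x' => sol.uxx (x' + 1) t) = fun x' => sol.uxx x' t :=
    funext fun y => sol.per_uxx ht y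
  rw [h2] at h
  exact h.unique (sol.huxxx x t ht)

include ht in
lemma per_ut (x : ℝ) : sol.ut (x + 1) t = sol.ut x t := by
  have h := (sol.hut (x + 1) t ht).congr
    (fun y hy => (sol.periodic y hy x).symm) (sol.periodic t ht x).symm
  exact ((uniqueDiffOn_Ico 0 T) t ht).eq_deriv _ h (sol.hut x t ht)

include ht in
lemma per_utx (x : ℝ) : sol.utx (x + 1) t = sol.utx x t := by
  have h := (sol.hutx (x + 1) t ht).comp_add_const x 1
  have h2 : (fun x' => sol.ut (x' + 1) t) = fun x' => sol.ut x' t :=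
    funext fun y => sol.per_ut ht y
  rw [h2] at h
  exact h.unique (sol.hutx x t ht)

include ht in
lemma per_utxx (x : ℝ) : sol.utxx (x + 1) t = sol.utxx x t := by
  have h := (sol.hutxx (x + 1) t ht).comp_add_const x 1
  have h2 : (fun x' => sol.utx (x' + 1) t) = fun x' => sol.utx x' t :=
    funext fun y => sol.per_utx ht y
  rw [h2] at h
  exact h.unique (sol.hutxx x t ht)

end Periodic

/-- slice continuity in x -/
lemma cont_sliceX {f : ℝ → ℝ → ℝ}
    (hf : ContinuousOn (fun p : ℝ × ℝ => f p.1 p.2) (Set.univ ×ˢ Set.Ico (0:ℝ) T))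
    {t : ℝ} (ht : t ∈ Set.Ico (0:ℝ) T) : Continuous fun x => f x t :=
  hf.comp_continuous (continuous_id.prodMk continuous_const)
    (fun x => Set.mk_mem_prod (Set.mem_univ x) ht)

/-- slice continuity in t -/
lemma cont_sliceT {f : ℝ → ℝ → ℝ}
    (hf : ContinuousOn (fun p : ℝ × ℝ => f p.1 p.2) (Set.univ ×ˢ Set.Ico (0:ℝ) T))
    (x : ℝ) : ContinuousOn (fun t => f x t) (Set.Ico (0:ℝ) T) :=
  hf.comp (continuous_const.prodMk continuous_id).continuousOn
    (fun y hy => Set.mk_mem_prod (Set.mem_univ x) hy)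


/-- membership upgrade -/
lemma mem_Ico_of_Ioc {t s : ℝ} (ht : t ∈ Set.Ico (0:ℝ) T) (hs : s ∈ Set.Ioc 0 t) :
    s ∈ Set.Ico (0:ℝ) T := ⟨le_of_lt hs.1, lt_of_le_of_lt hs.2 ht.2⟩

lemma Icc_subset_Ico {t : ℝ} (ht : t ∈ Set.Ico (0:ℝ) T) :
    Set.Icc (0:ℝ) t ⊆ Set.Ico (0:ℝ) T :=
  fun s hs => ⟨hs.1, lt_of_le_of_lt hs.2 ht.2⟩

/-- FTC in time for a function with one-sided time derivative on `[0,T)`. -/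
lemma ftc_time {f g : ℝ → ℝ → ℝ}
    (hcont : ContinuousOn (fun p : ℝ × ℝ => f p.1 p.2) (Set.univ ×ˢ Set.Ico (0:ℝ) T))
    (hcontg : ContinuousOn (fun p : ℝ × ℝ => g p.1 p.2) (Set.univ ×ˢ Set.Ico (0:ℝ) T))
    (hd : ∀ (x : ℝ), ∀ t ∈ Set.Ico (0:ℝ) T,
      HasDerivWithinAt (fun t' => f x t') (g x t) (Set.Ico (0:ℝ) T) t)
    {t : ℝ} (ht : t ∈ Set.Ico (0:ℝ) T) (x : ℝ) :
    f x t = f x 0 + ∫ s in (0:ℝ)..t, g x s := by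
  have h1 : ∫ s in (0:ℝ)..t, g x s = f x t - f x 0 := by
    apply intervalIntegral.integral_eq_sub_of_hasDeriv_right_of_le ht.1
    · exact (cont_sliceT hcont x).mono (Icc_subset_Ico ht)
    · intro s hs
      have hsm : s ∈ Set.Ico (0:ℝ) T := ⟨le_of_lt hs.1, lt_of_lt_of_le hs.2 (le_of_lt ht.2)⟩
      refine (hd x s hsm).mono_of_mem_nhdsWithin ?_
      have h3 : Set.Iio T ∩ Set.Ioi s ∈ nhdsWithin s (Set.Ioi s) :=
        Filter.inter_mem (mem_nhdsWithin_of_mem_nhds (Iio_mem_nhds hsm.2)) self_mem_nhdsWithin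
      exact Filter.mem_of_superset h3 (fun y hy => ⟨le_of_lt (lt_trans hs.1 hy.2), hy.1⟩)
    · apply ContinuousOn.intervalIntegrable
      rw [Set.uIcc_of_le ht.1]
      exact (cont_sliceT hcontg x).mono (Icc_subset_Ico ht)
  rw [h1]; ring

lemma rep_u (hT : 0 < T) {t : ℝ} (ht : t ∈ Set.Ico (0:ℝ) T) (x : ℝ) :
    sol.u x t = sol.u x 0 + ∫ s in (0:ℝ)..t, sol.ut x s :=
  ftc_time sol.contu sol.contut sol.hut ht x

lemma uIoc_subset_Ico {t : ℝ} (ht : t ∈ Set.Ico (0:ℝ) T) :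
    Set.uIoc (0:ℝ) t ⊆ Set.Ico (0:ℝ) T := by
  rw [Set.uIoc_of_le ht.1]
  exact fun s hs => mem_Ico_of_Ioc ht hs

/-- differentiation under the interval integral in the spatial parameter -/
lemma paramderiv {f g : ℝ → ℝ → ℝ}
    (hcontf : ContinuousOn (fun p : ℝ × ℝ => f p.1 p.2) (Set.univ ×ˢ Set.Ico (0:ℝ) T))
    (hcontg : ContinuousOn (fun p : ℝ × ℝ => g p.1 p.2) (Set.univ ×ˢ Set.Ico (0:ℝ) T))
    (hfx : ∀ (x : ℝ), ∀ s ∈ Set.Ico (0:ℝ) T, HasDerivAt (fun x' => f x' s) (g x s) x)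
    {t : ℝ} (ht : t ∈ Set.Ico (0:ℝ) T) (x : ℝ) :
    HasDerivAt (fun y => ∫ s in (0:ℝ)..t, f y s) (∫ s in (0:ℝ)..t, g x s) x := by
  obtain ⟨C, hC⟩ : ∃ C, ∀ p ∈ (Set.Icc (x-1) (x+1) ×ˢ Set.Icc (0:ℝ) t),
      ‖g p.1 p.2‖ ≤ C := by
    apply IsCompact.exists_bound_of_continuousOn (isCompact_Icc.prod isCompact_Icc)
    exact hcontg.mono (Set.prod_mono (Set.subset_univ _) (Icc_subset_Ico ht))
  have hmeas : ∀ (y : ℝ), AEStronglyMeasurable (fun s => f y s)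
      (MeasureTheory.volume.restrict (Set.uIoc (0:ℝ) t)) := fun y =>
    ((cont_sliceT hcontf y).mono (uIoc_subset_Ico ht)).aestronglyMeasurable
      measurableSet_uIoc
  have key := intervalIntegral.hasDerivAt_integral_of_dominated_loc_of_deriv_le
    (F := fun y s => f y s) (F' := fun y s => g y s) (x₀ := x) (a := 0) (b := t)
    (μ := MeasureTheory.volume) (bound := fun _ => C) (Metric.ball_mem_nhds x one_pos)
    (Filter.Eventually.of_forall hmeas)
    (by
      apply ContinuousOn.intervalIntegrable
      rw [Set.uIcc_of_le ht.1]
      exact (cont_sliceT hcontf x).mono (Icc_subset_Ico ht))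
    (((cont_sliceT hcontg x).mono (uIoc_subset_Ico ht)).aestronglyMeasurable
      measurableSet_uIoc)
    (Filter.Eventually.of_forall ?_)
    (intervalIntegrable_const)
    (Filter.Eventually.of_forall ?_)
  · exact key.2
  · intro s hs y hy
    have hy' : y ∈ Set.Icc (x-1) (x+1) := by
      have := Real.ball_eq_Ioo x 1 ▸ hy
      exact ⟨le_of_lt (by linarith [this.1]), le_of_lt (by linarith [this.2])⟩
    have hs' : s ∈ Set.Icc (0:ℝ) t := by
      rw [Set.uIoc_of_le ht.1] at hs
      exact ⟨le_of_lt hs.1, hs.2⟩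
    exact hC (y, s) (Set.mk_mem_prod hy' hs')
  · intro s hs y _
    exact hfx y s (uIoc_subset_Ico ht hs)

lemma rep_ux (hT : 0 < T) {t : ℝ} (ht : t ∈ Set.Ico (0:ℝ) T) (x : ℝ) :
    sol.ux x t = sol.ux x 0 + ∫ s in (0:ℝ)..t, sol.utx x s := by
  have h0T : (0:ℝ) ∈ Set.Ico (0:ℝ) T := ⟨le_refl 0, hT⟩
  have hG := (sol.hux x 0 h0T).add (paramderiv sol.contut sol.contutx sol.hutx ht x)
  have heq : (fun y => sol.u y 0 + ∫ s in (0:ℝ)..t, sol.ut y s) = fun y => sol.u y t :=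
    funext fun y => (sol.rep_u hT ht y).symm
  simp only [Pi.add_def] at hG
  rw [heq] at hG
  exact (hG.unique (sol.hux x t ht)).symm

lemma rep_uxx (hT : 0 < T) {t : ℝ} (ht : t ∈ Set.Ico (0:ℝ) T) (x : ℝ) :
    sol.uxx x t = sol.uxx x 0 + ∫ s in (0:ℝ)..t, sol.utxx x s := by
  have h0T : (0:ℝ) ∈ Set.Ico (0:ℝ) T := ⟨le_refl 0, hT⟩
  have hG := (sol.huxx x 0 h0T).add (paramderiv sol.contutx sol.contutxx sol.hutxx ht x)
  have heq : (fun y => sol.ux y 0 + ∫ s in (0:ℝ)..t, sol.utx y s) = fun y => sol.ux y t :=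
    funext fun y => (sol.rep_ux hT ht y).symm
  simp only [Pi.add_def] at hG
  rw [heq] at hG
  exact (hG.unique (sol.huxx x t ht)).symm

/-- interior time derivative via FTC -/
lemma timederiv {f g : ℝ → ℝ → ℝ} (x : ℝ)
    (hcontg : ContinuousOn (fun p : ℝ × ℝ => g p.1 p.2) (Set.univ ×ˢ Set.Ico (0:ℝ) T))
    (hrep : ∀ t ∈ Set.Ico (0:ℝ) T, f x t = f x 0 + ∫ s in (0:ℝ)..t, g x s)
    {s : ℝ} (hs : s ∈ Set.Ioo 0 T) : HasDerivAt (fun t => f x t) (g x s) s := by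
  have hsI : s ∈ Set.Ico (0:ℝ) T := ⟨le_of_lt hs.1, hs.2⟩
  have hint : IntervalIntegrable (fun σ => g x σ) MeasureTheory.volume 0 s := by
    apply ContinuousOn.intervalIntegrable
    rw [Set.uIcc_of_le hsI.1]
    exact (cont_sliceT hcontg x).mono (Icc_subset_Ico hsI)
  have hmeas : StronglyMeasurableAtFilter (fun σ => g x σ) (nhds s) :=
    ContinuousOn.stronglyMeasurableAtFilter isOpen_Ioo
      ((cont_sliceT hcontg x).mono Set.Ioo_subset_Ico_self) s hs
  have hca : ContinuousAt (fun σ => g x σ) s :=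
    ((cont_sliceT hcontg x) s hsI).continuousAt (Ico_mem_nhds hs.1 hs.2)
  have hI := (intervalIntegral.integral_hasDerivAt_right hint hmeas hca).const_add (f x 0)
  apply hI.congr_of_eventuallyEq
  filter_upwards [Ioo_mem_nhds hs.1 hs.2] with y hy
  exact hrep y ⟨le_of_lt hy.1, hy.2⟩

lemma u_time (hT : 0 < T) (x : ℝ) {s : ℝ} (hs : s ∈ Set.Ioo 0 T) :
    HasDerivAt (fun t => sol.u x t) (sol.ut x s) s :=
  timederiv x sol.contut (fun t ht => sol.rep_u hT ht x) hs

lemma ux_time (hT : 0 < T) (x : ℝ) {s : ℝ} (hs : s ∈ Set.Ioo 0 T) :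
    HasDerivAt (fun t => sol.ux x t) (sol.utx x s) s :=
  timederiv x sol.contutx (fun t ht => sol.rep_ux hT ht x) hs

lemma uxx_time (hT : 0 < T) (x : ℝ) {s : ℝ} (hs : s ∈ Set.Ioo 0 T) :
    HasDerivAt (fun t => sol.uxx x t) (sol.utxx x s) s :=
  timederiv x sol.contutxx (fun t ht => sol.rep_uxx hT ht x) hs

/-- The key spatial integral identity obtained from the PDE and integration by parts. -/
lemma key_integral {t : ℝ} (ht : t ∈ Set.Ico (0:ℝ) T) :
    ∫ x in (0:ℝ)..1, (sol.u x t * sol.ut x t + (μ/6) * (sol.ux x t * sol.utx x t)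
        + (μ^2/144) * (sol.uxx x t * sol.utxx x t))
    = ∫ x in (0:ℝ)..1, ((ε*μ/8) * (sol.u x t * sol.ux x t * sol.uxx x t)
        - (ε^2*μ/32) * ((sol.u x t)^2 * sol.ux x t * sol.uxx x t)
        + (ε^3*μ/64) * ((sol.u x t)^3 * sol.ux x t * sol.uxx x t)
        + (7*ε*μ^2/192) * (sol.ux x t * (sol.uxx x t)^2)) := by
  set W : ℝ → ℝ := fun y => (-(1/2 : ℝ)) * (sol.u y t)^2 + (-(ε/2)) * (sol.u y t)^3
      + (3*ε^2/32) * (sol.u y t)^4 + (-(3*ε^3/80)) * (sol.u y t)^5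
      + (μ/12) * (sol.ux y t)^2 + (μ^2/288) * (sol.uxx y t)^2
      + (7*ε*μ^2/576) * (sol.u y t * (sol.uxx y t)^2)
      + (-(7*ε*μ/24)) * ((sol.u y t)^2 * sol.uxx y t)
      + (μ/12) * (sol.u y t * sol.utx y t) + (μ/12) * (sol.ux y t * sol.ut y t)
      + (-(μ/12)) * (sol.u y t * sol.uxx y t) with hWdef
  set Wx : ℝ → ℝ := fun x => -(sol.u x t * sol.ux x t)
      - (3*ε/2) * ((sol.u x t)^2 * sol.ux x t)
      + (3*ε^2/8) * ((sol.u x t)^3 * sol.ux x t)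
      - (3*ε^3/16) * ((sol.u x t)^4 * sol.ux x t)
      + (μ/6) * (sol.ux x t * sol.uxx x t) + (μ^2/144) * (sol.uxx x t * sol.uxxx x t)
      + (7*ε*μ^2/576) * (sol.ux x t * (sol.uxx x t)^2
          + 2 * (sol.u x t * (sol.uxx x t * sol.uxxx x t)))
      - (7*ε*μ/24) * (2 * (sol.u x t * (sol.ux x t * sol.uxx x t))
          + (sol.u x t)^2 * sol.uxxx x t)
      + (μ/12) * (sol.ux x t * sol.utx x t + sol.u x t * sol.utxx x t)
      + (μ/12) * (sol.uxx x t * sol.ut x t + sol.ux x t * sol.utx x t)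
      - (μ/12) * (sol.ux x t * sol.uxx x t + sol.u x t * sol.uxxx x t) with hWxdef
  have Cu := cont_sliceX sol.contu ht
  have Cux := cont_sliceX sol.contux ht
  have Cuxx := cont_sliceX sol.contuxx ht
  have Cuxxx := cont_sliceX sol.contuxxx ht
  have Cut := cont_sliceX sol.contut ht
  have Cutx := cont_sliceX sol.contutx ht
  have Cutxx := cont_sliceX sol.contutxx ht
  have hW : ∀ x : ℝ, HasDerivAt W (Wx x) x := by
    intro x
    have A := sol.hux x t ht
    have B := sol.huxx x t ht
    have C := sol.huxxx x t ht
    have P := sol.hutx x t ht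
    have Q := sol.hutxx x t ht
    have BIG := (((((((((((A.pow 2).const_mul (-(1/2 : ℝ))).add
      ((A.pow 3).const_mul (-(ε/2)))).add
      ((A.pow 4).const_mul (3*ε^2/32))).add
      ((A.pow 5).const_mul (-(3*ε^3/80)))).add
      ((B.pow 2).const_mul (μ/12))).add
      ((C.pow 2).const_mul (μ^2/288))).add
      ((A.mul (C.pow 2)).const_mul (7*ε*μ^2/576))).add
      (((A.pow 2).mul C).const_mul (-(7*ε*μ/24)))).add
      ((A.mul Q).const_mul (μ/12))).add
      ((B.mul P).const_mul (μ/12))).add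
      ((A.mul C).const_mul (-(μ/12)))
    simp only [Pi.add_def, Pi.mul_apply, Pi.pow_apply] at BIG
    refine BIG.congr_deriv ?_
    push_cast
    simp only [hWxdef]
    ring
  have hWxcont : Continuous Wx := by
    rw [hWxdef]; fun_prop
  have hWx_int : ∫ x in (0:ℝ)..1, Wx x = W 1 - W 0 :=
    intervalIntegral.integral_eq_sub_of_hasDerivAt (fun x _ => hW x)
      (hWxcont.intervalIntegrable 0 1)
  have hperW : W 1 = W 0 := by
    have h := hWdef
    have : W (0 + 1) = W 0 := by
      rw [hWdef]
      simp only
      rw [sol.per_u ht, sol.per_ux ht, sol.per_uxx ht, sol.per_ut ht, sol.per_utx ht]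
    rwa [zero_add] at this
  have hWzero : ∫ x in (0:ℝ)..1, Wx x = 0 := by rw [hWx_int, hperW, sub_self]
  have hpt : ∀ x : ℝ, sol.u x t * sol.ut x t + (μ/6) * (sol.ux x t * sol.utx x t)
        + (μ^2/144) * (sol.uxx x t * sol.utxx x t)
      = ((ε*μ/8) * (sol.u x t * sol.ux x t * sol.uxx x t)
        - (ε^2*μ/32) * ((sol.u x t)^2 * sol.ux x t * sol.uxx x t)
        + (ε^3*μ/64) * ((sol.u x t)^3 * sol.ux x t * sol.uxx x t)
        + (7*ε*μ^2/192) * (sol.ux x t * (sol.uxx x t)^2)) + Wx x := by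
    intro x
    have E := sol.eqn x t ht
    rw [hWxdef]
    simp only
    linear_combination (sol.u x t - μ/12 * sol.uxx x t) * E
  have hScont : Continuous fun x => (ε*μ/8) * (sol.u x t * sol.ux x t * sol.uxx x t)
        - (ε^2*μ/32) * ((sol.u x t)^2 * sol.ux x t * sol.uxx x t)
        + (ε^3*μ/64) * ((sol.u x t)^3 * sol.ux x t * sol.uxx x t)
        + (7*ε*μ^2/192) * (sol.ux x t * (sol.uxx x t)^2) := by fun_prop
  calc ∫ x in (0:ℝ)..1, (sol.u x t * sol.ut x t + (μ/6) * (sol.ux x t * sol.utx x t)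
        + (μ^2/144) * (sol.uxx x t * sol.utxx x t))
      = ∫ x in (0:ℝ)..1, (((ε*μ/8) * (sol.u x t * sol.ux x t * sol.uxx x t)
        - (ε^2*μ/32) * ((sol.u x t)^2 * sol.ux x t * sol.uxx x t)
        + (ε^3*μ/64) * ((sol.u x t)^3 * sol.ux x t * sol.uxx x t)
        + (7*ε*μ^2/192) * (sol.ux x t * (sol.uxx x t)^2)) + Wx x) := by
        apply intervalIntegral.integral_congr
        intro x _
        exact hpt x
    _ = (∫ x in (0:ℝ)..1, ((ε*μ/8) * (sol.u x t * sol.ux x t * sol.uxx x t)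
        - (ε^2*μ/32) * ((sol.u x t)^2 * sol.ux x t * sol.uxx x t)
        + (ε^3*μ/64) * ((sol.u x t)^3 * sol.ux x t * sol.uxx x t)
        + (7*ε*μ^2/192) * (sol.ux x t * (sol.uxx x t)^2)))
        + ∫ x in (0:ℝ)..1, Wx x :=
        intervalIntegral.integral_add (hScont.intervalIntegrable 0 1)
          (hWxcont.intervalIntegrable 0 1)
    _ = _ := by rw [hWzero, add_zero]

lemma triple_bound (a b c M : ℝ) (h1 : -M ≤ a) (h2 : a ≤ M) :
    a * (b * c) ≤ M / 2 * (b ^ 2 + c ^ 2) := by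
  nlinarith [mul_nonneg (by linarith : (0:ℝ) ≤ M + a) (sq_nonneg (b - c)),
    mul_nonneg (by linarith : (0:ℝ) ≤ M - a) (sq_nonneg (b + c))]

lemma pt_bound (ε μ M₀ M₁ a b c : ℝ) (hε : 0 ≤ ε) (hμ : 0 ≤ μ) (hM₀ : 0 ≤ M₀)
    (ha : |a| ≤ M₀) (hb : b ≤ M₁) :
    ε*μ/8 * (a*b*c) - ε^2*μ/32 * (a^2*b*c) + ε^3*μ/64 * (a^3*b*c) + 7*ε*μ^2/192 * (b*c^2)
    ≤ ((ε*μ/16)*M₀ + (ε^2*μ/64)*M₀^2 + (ε^3*μ/128)*M₀^3) * (b^2 + c^2)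
      + ((7*ε*μ^2/192)*M₁) * c^2 := by
  have ha1 := abs_le.1 ha
  have e1 : a * (b*c) ≤ M₀/2 * (b^2+c^2) := triple_bound a b c M₀ ha1.1 ha1.2
  have e2 : (-(a^2)) * (b*c) ≤ M₀^2/2 * (b^2+c^2) := by
    refine triple_bound _ b c _ (by nlinarith) (by nlinarith)
  have e3 : a^3 * (b*c) ≤ M₀^3/2 * (b^2+c^2) := by
    refine triple_bound _ b c _ ?_ ?_
    · nlinarith [mul_nonneg (by linarith [ha1.1] : (0:ℝ) ≤ a + M₀)
        (by nlinarith [sq_nonneg (2*a - M₀)] : (0:ℝ) ≤ a^2 - a*M₀ + M₀^2)]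
    · nlinarith [mul_nonneg (by linarith [ha1.2] : (0:ℝ) ≤ M₀ - a)
        (by nlinarith [sq_nonneg (2*a + M₀)] : (0:ℝ) ≤ a^2 + a*M₀ + M₀^2)]
  have e4 : b * c^2 ≤ M₁ * c^2 := mul_le_mul_of_nonneg_right hb (sq_nonneg c)
  have c1 : (0:ℝ) ≤ ε*μ/8 := by positivity
  have c2 : (0:ℝ) ≤ ε^2*μ/32 := by positivity
  have c3 : (0:ℝ) ≤ ε^3*μ/64 := by positivity
  have c4 : (0:ℝ) ≤ 7*ε*μ^2/192 := by positivity
  have f1 := mul_le_mul_of_nonneg_left e1 c1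
  have f2 := mul_le_mul_of_nonneg_left e2 c2
  have f3 := mul_le_mul_of_nonneg_left e3 c3
  have f4 := mul_le_mul_of_nonneg_left e4 c4
  nlinarith [f1, f2, f3, f4]

/-- The main differential inequality: the time derivative integrand integral is bounded by
`K` times the energy integral. -/
lemma integral_bound {M₀ M₁ : ℝ} (hε : 0 < ε) (hμ : 0 < μ) (hM₀ : 0 ≤ M₀) (hM₁ : 0 ≤ M₁)
    {t : ℝ} (ht : t ∈ Set.Ico (0:ℝ) T)
    (hbd : ∀ x ∈ Set.Icc (0:ℝ) 1, |sol.u x t| ≤ M₀ ∧ sol.ux x t ≤ M₁) :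
    ∫ x in (0:ℝ)..1, (sol.u x t * sol.ut x t + (μ/6) * (sol.ux x t * sol.utx x t)
        + (μ^2/144) * (sol.uxx x t * sol.utxx x t))
    ≤ ((12*((ε*μ/16)*M₀ + (ε^2*μ/64)*M₀^2 + (ε^3*μ/128)*M₀^3)/μ
        + 288*(((ε*μ/16)*M₀ + (ε^2*μ/64)*M₀^2 + (ε^3*μ/128)*M₀^3)
            + (7*ε*μ^2/192)*M₁)/μ^2) / 2)
      * ∫ x in (0:ℝ)..1, ((sol.u x t)^2 + (μ/6) * (sol.ux x t)^2
          + (μ^2/144) * (sol.uxx x t)^2) := by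
  set Ka := (ε*μ/16)*M₀ + (ε^2*μ/64)*M₀^2 + (ε^3*μ/128)*M₀^3 with hKa
  set Kb := (7*ε*μ^2/192)*M₁ with hKb
  have hKa0 : 0 ≤ Ka := by rw [hKa]; positivity
  have hKb0 : 0 ≤ Kb := by rw [hKb]; positivity
  have Cu := cont_sliceX sol.contu ht
  have Cux := cont_sliceX sol.contux ht
  have Cuxx := cont_sliceX sol.contuxx ht
  -- step 1: rewrite the LHS using the key integral identity
  rw [sol.key_integral ht]
  -- step 2: bound the new integrand pointwise on [0,1]
  have hmono : ∫ x in (0:ℝ)..1, ((ε*μ/8) * (sol.u x t * sol.ux x t * sol.uxx x t)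
        - (ε^2*μ/32) * ((sol.u x t)^2 * sol.ux x t * sol.uxx x t)
        + (ε^3*μ/64) * ((sol.u x t)^3 * sol.ux x t * sol.uxx x t)
        + (7*ε*μ^2/192) * (sol.ux x t * (sol.uxx x t)^2))
      ≤ ∫ x in (0:ℝ)..1, (Ka * ((sol.ux x t)^2 + (sol.uxx x t)^2)
          + Kb * (sol.uxx x t)^2) := by
    apply intervalIntegral.integral_mono_on zero_le_one
    · apply Continuous.intervalIntegrable; fun_prop
    · apply Continuous.intervalIntegrable; fun_prop
    · intro x hx
      have h := pt_bound ε μ M₀ M₁ (sol.u x t) (sol.ux x t) (sol.uxx x t)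
        hε.le hμ.le hM₀ (hbd x hx).1 (hbd x hx).2
      calc (ε*μ/8) * (sol.u x t * sol.ux x t * sol.uxx x t)
            - (ε^2*μ/32) * ((sol.u x t)^2 * sol.ux x t * sol.uxx x t)
            + (ε^3*μ/64) * ((sol.u x t)^3 * sol.ux x t * sol.uxx x t)
            + (7*ε*μ^2/192) * (sol.ux x t * (sol.uxx x t)^2)
          = ε*μ/8 * (sol.u x t * sol.ux x t * sol.uxx x t)
            - ε^2*μ/32 * ((sol.u x t)^2 * sol.ux x t * sol.uxx x t)
            + ε^3*μ/64 * ((sol.u x t)^3 * sol.ux x t * sol.uxx x t)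
            + 7*ε*μ^2/192 * (sol.ux x t * (sol.uxx x t)^2) := by ring
        _ ≤ Ka * ((sol.ux x t)^2 + (sol.uxx x t)^2) + Kb * (sol.uxx x t)^2 := by
            rw [hKa, hKb]
            convert h using 2 <;> ring
  refine le_trans hmono ?_
  -- step 3: split the integrals
  have hB1 : IntervalIntegrable (fun x => (sol.ux x t)^2) MeasureTheory.volume 0 1 := by
    apply Continuous.intervalIntegrable; fun_prop
  have hB2 : IntervalIntegrable (fun x => (sol.uxx x t)^2) MeasureTheory.volume 0 1 := by
    apply Continuous.intervalIntegrable; fun_prop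
  have hB0 : IntervalIntegrable (fun x => (sol.u x t)^2) MeasureTheory.volume 0 1 := by
    apply Continuous.intervalIntegrable; fun_prop
  set B0 := ∫ x in (0:ℝ)..1, (sol.u x t)^2 with hB0d
  set B1 := ∫ x in (0:ℝ)..1, (sol.ux x t)^2 with hB1d
  set B2 := ∫ x in (0:ℝ)..1, (sol.uxx x t)^2 with hB2d
  have hsplit1 : ∫ x in (0:ℝ)..1, (Ka * ((sol.ux x t)^2 + (sol.uxx x t)^2)
      + Kb * (sol.uxx x t)^2) = Ka * B1 + (Ka + Kb) * B2 := by
    rw [show (fun x => Ka * ((sol.ux x t)^2 + (sol.uxx x t)^2) + Kb * (sol.uxx x t)^2)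
        = fun x => (Ka * (sol.ux x t)^2 + (Ka + Kb) * (sol.uxx x t)^2) from
        funext fun x => by ring]
    rw [intervalIntegral.integral_add (hB1.const_mul Ka) (hB2.const_mul (Ka + Kb)),
      intervalIntegral.integral_const_mul, intervalIntegral.integral_const_mul]
  have hsplit2 : ∫ x in (0:ℝ)..1, ((sol.u x t)^2 + (μ/6) * (sol.ux x t)^2
      + (μ^2/144) * (sol.uxx x t)^2) = B0 + (μ/6) * B1 + (μ^2/144) * B2 := by
    rw [intervalIntegral.integral_add (hB0.add (hB1.const_mul (μ/6))) (hB2.const_mul (μ^2/144)),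
      intervalIntegral.integral_add hB0 (hB1.const_mul (μ/6)),
      intervalIntegral.integral_const_mul, intervalIntegral.integral_const_mul]
  rw [hsplit1, hsplit2]
  have hB0n : 0 ≤ B0 := intervalIntegral.integral_nonneg zero_le_one (fun x _ => sq_nonneg _)
  have hB1n : 0 ≤ B1 := intervalIntegral.integral_nonneg zero_le_one (fun x _ => sq_nonneg _)
  have hB2n : 0 ≤ B2 := intervalIntegral.integral_nonneg zero_le_one (fun x _ => sq_nonneg _)
  set K := 12*Ka/μ + 288*(Ka + Kb)/μ^2 with hK
  have hg1 : K/2 * (μ/6) = Ka + 24*(Ka + Kb)/μ := by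
    rw [hK]; field_simp; ring
  have hg2 : K/2 * (μ^2/144) = Ka*μ/24 + (Ka + Kb) := by
    rw [hK]; field_simp; ring
  have hgoal : K/2 * (B0 + (μ/6) * B1 + (μ^2/144) * B2)
      = K/2 * B0 + (K/2 * (μ/6)) * B1 + (K/2 * (μ^2/144)) * B2 := by ring
  rw [hgoal, hg1, hg2]
  have hK0 : 0 ≤ K/2 := by rw [hK]; positivity
  have t1 : Ka * B1 ≤ (Ka + 24*(Ka + Kb)/μ) * B1 := by
    apply mul_le_mul_of_nonneg_right _ hB1n
    have : 0 ≤ 24*(Ka + Kb)/μ := by positivity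
    linarith
  have t2 : (Ka + Kb) * B2 ≤ (Ka*μ/24 + (Ka + Kb)) * B2 := by
    apply mul_le_mul_of_nonneg_right _ hB2n
    have : 0 ≤ Ka*μ/24 := by positivity
    linarith
  have t0 : 0 ≤ K/2 * B0 := mul_nonneg hK0 hB0n
  linarith

lemma joint_contF :
    ContinuousOn (fun p : ℝ × ℝ => (sol.u p.1 p.2)^2 + (μ/6) * (sol.ux p.1 p.2)^2
      + (μ^2/144) * (sol.uxx p.1 p.2)^2) (Set.univ ×ˢ Set.Ico (0:ℝ) T) :=
  (((sol.contu.pow 2).add (continuousOn_const.mul (sol.contux.pow 2))).add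
    (continuousOn_const.mul (sol.contuxx.pow 2)))

lemma joint_contG :
    ContinuousOn (fun p : ℝ × ℝ => 2 * (sol.u p.1 p.2 * sol.ut p.1 p.2
      + (μ/6) * (sol.ux p.1 p.2 * sol.utx p.1 p.2)
      + (μ^2/144) * (sol.uxx p.1 p.2 * sol.utxx p.1 p.2)))
      (Set.univ ×ˢ Set.Ico (0:ℝ) T) :=
  continuousOn_const.mul (((sol.contu.mul sol.contut).add
    (continuousOn_const.mul (sol.contux.mul sol.contutx))).add
    (continuousOn_const.mul (sol.contuxx.mul sol.contutxx)))

/-- Derivative of the energy integral at interior times. -/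
lemma energy_deriv (hT : 0 < T) {s : ℝ} (hs : s ∈ Set.Ioo 0 T) :
    HasDerivAt (fun t => ∫ x in (0:ℝ)..1, ((sol.u x t)^2 + (μ/6) * (sol.ux x t)^2
        + (μ^2/144) * (sol.uxx x t)^2))
      (∫ x in (0:ℝ)..1, 2 * (sol.u x s * sol.ut x s + (μ/6) * (sol.ux x s * sol.utx x s)
        + (μ^2/144) * (sol.uxx x s * sol.utxx x s))) s := by
  set ε₀ := min s (T - s) / 2 with hε₀
  have hε₀pos : 0 < ε₀ := by
    rw [hε₀]
    have h1 : 0 < min s (T - s) := lt_min hs.1 (by linarith [hs.2])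
    linarith
  have hball : Metric.ball s ε₀ ⊆ Set.Ioo 0 T := by
    intro y hy
    rw [Real.ball_eq_Ioo] at hy
    have h1 : ε₀ ≤ s / 2 := by rw [hε₀]; have := min_le_left s (T - s); linarith
    have h2 : ε₀ ≤ (T - s) / 2 := by rw [hε₀]; have := min_le_right s (T - s); linarith
    constructor <;> [linarith [hy.1]; linarith [hy.2]]
  have hIccsub : Set.Icc (s - ε₀) (s + ε₀) ⊆ Set.Ico 0 T := by
    intro y hy
    have h1 : ε₀ ≤ s / 2 := by rw [hε₀]; have := min_le_left s (T - s); linarith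
    have h2 : ε₀ ≤ (T - s) / 2 := by rw [hε₀]; have := min_le_right s (T - s); linarith
    have := hs.1; have := hs.2
    exact ⟨by linarith [hy.1], by linarith [hy.2]⟩
  obtain ⟨C, hC⟩ : ∃ C, ∀ p ∈ (Set.Icc (0:ℝ) 1 ×ˢ Set.Icc (s - ε₀) (s + ε₀)),
      ‖2 * (sol.u p.1 p.2 * sol.ut p.1 p.2 + (μ/6) * (sol.ux p.1 p.2 * sol.utx p.1 p.2)
        + (μ^2/144) * (sol.uxx p.1 p.2 * sol.utxx p.1 p.2))‖ ≤ C := by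
    apply IsCompact.exists_bound_of_continuousOn (isCompact_Icc.prod isCompact_Icc)
    exact sol.joint_contG.mono (Set.prod_mono (Set.subset_univ _) hIccsub)
  have key := intervalIntegral.hasDerivAt_integral_of_dominated_loc_of_deriv_le
    (F := fun t x => (sol.u x t)^2 + (μ/6) * (sol.ux x t)^2 + (μ^2/144) * (sol.uxx x t)^2)
    (F' := fun t x => 2 * (sol.u x t * sol.ut x t + (μ/6) * (sol.ux x t * sol.utx x t)
        + (μ^2/144) * (sol.uxx x t * sol.utxx x t)))
    (x₀ := s) (a := 0) (b := 1) (μ := MeasureTheory.volume) (bound := fun _ => C)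
    (Metric.ball_mem_nhds s hε₀pos) ?_ ?_ ?_ ?_ intervalIntegrable_const ?_
  · exact key.2
  · -- measurability of F y for y near s
    filter_upwards [IsOpen.mem_nhds Metric.isOpen_ball (Metric.mem_ball_self hε₀pos)] with y hy
    have hyI : y ∈ Set.Ico (0:ℝ) T := Set.Ioo_subset_Ico_self (hball hy)
    have : Continuous fun x => (sol.u x y)^2 + (μ/6) * (sol.ux x y)^2
        + (μ^2/144) * (sol.uxx x y)^2 := by
      have c1 := cont_sliceX sol.contu hyI
      have c2 := cont_sliceX sol.contux hyI
      have c3 := cont_sliceX sol.contuxx hyI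
      fun_prop
    exact this.aestronglyMeasurable
  · -- integrability of F s
    apply Continuous.intervalIntegrable
    have hsI : s ∈ Set.Ico (0:ℝ) T := Set.Ioo_subset_Ico_self hs
    have c1 := cont_sliceX sol.contu hsI
    have c2 := cont_sliceX sol.contux hsI
    have c3 := cont_sliceX sol.contuxx hsI
    fun_prop
  · -- measurability of F' s
    have hsI : s ∈ Set.Ico (0:ℝ) T := Set.Ioo_subset_Ico_self hs
    have : Continuous fun x => 2 * (sol.u x s * sol.ut x s
        + (μ/6) * (sol.ux x s * sol.utx x s)
        + (μ^2/144) * (sol.uxx x s * sol.utxx x s)) := by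
      have c1 := cont_sliceX sol.contu hsI
      have c2 := cont_sliceX sol.contux hsI
      have c3 := cont_sliceX sol.contuxx hsI
      have c4 := cont_sliceX sol.contut hsI
      have c5 := cont_sliceX sol.contutx hsI
      have c6 := cont_sliceX sol.contutxx hsI
      fun_prop
    exact this.aestronglyMeasurable
  · -- bound
    apply Filter.Eventually.of_forall
    intro x hx y hy
    have hx' : x ∈ Set.Icc (0:ℝ) 1 := by
      rw [Set.uIoc_of_le zero_le_one] at hx
      exact ⟨le_of_lt hx.1, hx.2⟩
    have hy' : y ∈ Set.Icc (s - ε₀) (s + ε₀) := by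
      rw [Real.ball_eq_Ioo] at hy
      exact ⟨le_of_lt hy.1, le_of_lt hy.2⟩
    exact hC (x, y) (Set.mk_mem_prod hx' hy')
  · -- differentiability in t
    apply Filter.Eventually.of_forall
    intro x _ y hy
    have hyIoo : y ∈ Set.Ioo 0 T := hball hy
    have BIG := ((((sol.u_time hT x hyIoo).pow 2).add
      (((sol.ux_time hT x hyIoo).pow 2).const_mul (μ/6))).add
      (((sol.uxx_time hT x hyIoo).pow 2).const_mul (μ^2/144)))
    simp only [Pi.add_def, Pi.pow_apply] at BIG
    convert BIG using 1
    push_cast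
    ring

/-- Continuity of the energy at `t = 0` from the right. -/
lemma energy_cont0 (hT : 0 < T) {t : ℝ} (htpos : 0 < t) (htT : t < T) :
    ContinuousWithinAt (fun s => ∫ x in (0:ℝ)..1, ((sol.u x s)^2 + (μ/6) * (sol.ux x s)^2
        + (μ^2/144) * (sol.uxx x s)^2)) (Set.Icc 0 t) 0 := by
  have htI : t ∈ Set.Ico (0:ℝ) T := ⟨htpos.le, htT⟩
  obtain ⟨C, hC⟩ : ∃ C, ∀ p ∈ (Set.Icc (0:ℝ) 1 ×ˢ Set.Icc (0:ℝ) t),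
      ‖(sol.u p.1 p.2)^2 + (μ/6) * (sol.ux p.1 p.2)^2 + (μ^2/144) * (sol.uxx p.1 p.2)^2‖
        ≤ C := by
    apply IsCompact.exists_bound_of_continuousOn (isCompact_Icc.prod isCompact_Icc)
    exact sol.joint_contF.mono (Set.prod_mono (Set.subset_univ _) (Icc_subset_Ico htI))
  apply intervalIntegral.continuousWithinAt_of_dominated_interval
    (bound := fun _ => C) ?_ ?_ intervalIntegrable_const ?_
  · filter_upwards [self_mem_nhdsWithin] with y hy
    have hyI : y ∈ Set.Ico (0:ℝ) T := Icc_subset_Ico htI hy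
    have : Continuous fun x => (sol.u x y)^2 + (μ/6) * (sol.ux x y)^2
        + (μ^2/144) * (sol.uxx x y)^2 := by
      have c1 := cont_sliceX sol.contu hyI
      have c2 := cont_sliceX sol.contux hyI
      have c3 := cont_sliceX sol.contuxx hyI
      fun_prop
    exact this.aestronglyMeasurable
  · filter_upwards [self_mem_nhdsWithin] with y hy
    apply Filter.Eventually.of_forall
    intro x hx
    have hx' : x ∈ Set.Icc (0:ℝ) 1 := by
      rw [Set.uIoc_of_le zero_le_one] at hx
      exact ⟨le_of_lt hx.1, hx.2⟩
    exact hC (x, y) (Set.mk_mem_prod hx' hy)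
  · apply Filter.Eventually.of_forall
    intro x _
    have hcont : ContinuousOn (fun s => (sol.u x s)^2 + (μ/6) * (sol.ux x s)^2
        + (μ^2/144) * (sol.uxx x s)^2) (Set.Ico (0:ℝ) T) :=
      (((cont_sliceT sol.contu x).pow 2).add
        (continuousOn_const.mul ((cont_sliceT sol.contux x).pow 2))).add
        (continuousOn_const.mul ((cont_sliceT sol.contuxx x).pow 2))
    exact (hcont.mono (Icc_subset_Ico htI)) 0 (Set.left_mem_Icc.2 htpos.le)
end ClassicalSol
open ClassicalSol in
/-- Gronwall estimate: if `|u| ≤ M₀` and `u_x ≤ M₁` on `[0,1] × [0,T)`, then the functional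
`H(t) = (1/2)∫₀¹ (u² + (μ/6)u_x² + (μ²/144)u_xx²) dx` satisfies `H(t) ≤ H(0)·e^{Kt}` for a
constant `K ≥ 0` depending only on `ε, μ, M₀, M₁`. -/
theorem stmt6 (ε μ M₀ M₁ : ℝ) (hε : 0 < ε) (hμ : 0 < μ) (hM₀ : 0 ≤ M₀) (hM₁ : 0 ≤ M₁) :
    ∃ K ≥ (0:ℝ), ∀ T > (0:ℝ), ∀ sol : ClassicalSol ε μ T,
      (∀ t ∈ Set.Ico (0:ℝ) T, ∀ x ∈ Set.Icc (0:ℝ) 1,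
        |sol.u x t| ≤ M₀ ∧ sol.ux x t ≤ M₁) →
      ∀ t ∈ Set.Ico (0:ℝ) T,
        (1/2) * (∫ x in (0:ℝ)..1,
            ((sol.u x t)^2 + (μ/6) * (sol.ux x t)^2 + (μ^2/144) * (sol.uxx x t)^2))
          ≤ (1/2) * (∫ x in (0:ℝ)..1,
              ((sol.u x 0)^2 + (μ/6) * (sol.ux x 0)^2 + (μ^2/144) * (sol.uxx x 0)^2))
            * Real.exp (K * t) := by
  set Ka := (ε*μ/16)*M₀ + (ε^2*μ/64)*M₀^2 + (ε^3*μ/128)*M₀^3 with hKa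
  set Kb := (7*ε*μ^2/192)*M₁ with hKb
  set K := 12*Ka/μ + 288*(Ka + Kb)/μ^2 with hK
  have hK0 : 0 ≤ K := by rw [hK, hKa, hKb]; positivity
  refine ⟨K, hK0, ?_⟩
  intro T hT sol hbd t ht
  set hh : ℝ → ℝ := fun s => (1/2) * (∫ x in (0:ℝ)..1,
      ((sol.u x s)^2 + (μ/6) * (sol.ux x s)^2 + (μ^2/144) * (sol.uxx x s)^2)) with hhdef
  show hh t ≤ hh 0 * Real.exp (K * t)
  rcases eq_or_lt_of_le ht.1 with h0 | h0
  · rw [← h0, mul_zero, Real.exp_zero, mul_one]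
  · -- 0 < t < T
    have htT : t < T := ht.2
    -- derivative of hh at interior points
    have hhh : ∀ s ∈ Set.Ioo 0 t, HasDerivAt hh
        (∫ x in (0:ℝ)..1, (sol.u x s * sol.ut x s + (μ/6) * (sol.ux x s * sol.utx x s)
          + (μ^2/144) * (sol.uxx x s * sol.utxx x s))) s := by
      intro s hs
      have hsT : s ∈ Set.Ioo 0 T := ⟨hs.1, lt_trans hs.2 htT⟩
      have hd := (sol.energy_deriv hT hsT).const_mul (1/2 : ℝ)
      have heq : (1/2 : ℝ) * (∫ x in (0:ℝ)..1, 2 * (sol.u x s * sol.ut x s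
            + (μ/6) * (sol.ux x s * sol.utx x s)
            + (μ^2/144) * (sol.uxx x s * sol.utxx x s)))
          = ∫ x in (0:ℝ)..1, (sol.u x s * sol.ut x s + (μ/6) * (sol.ux x s * sol.utx x s)
            + (μ^2/144) * (sol.uxx x s * sol.utxx x s)) := by
        rw [intervalIntegral.integral_const_mul]
        ring
      rw [heq] at hd
      exact hd
    -- the exponential-weighted energy
    set φ : ℝ → ℝ := fun s => hh s * Real.exp (-K * s) with hφ
    have hφderiv : ∀ s ∈ Set.Ioo 0 t, HasDerivAt φ
        ((∫ x in (0:ℝ)..1, (sol.u x s * sol.ut x s + (μ/6) * (sol.ux x s * sol.utx x s)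
          + (μ^2/144) * (sol.uxx x s * sol.utxx x s))) * Real.exp (-K * s)
          + hh s * (Real.exp (-K * s) * (-K))) s := by
      intro s hs
      exact (hhh s hs).mul (by simpa using ((hasDerivAt_id s).const_mul (-K)).exp)
    have hanti : AntitoneOn φ (Set.Icc 0 t) := by
      apply antitoneOn_of_deriv_nonpos (convex_Icc 0 t)
      · -- continuity of φ on [0, t]
        apply ContinuousOn.mul _ (Real.continuous_exp.comp (continuous_const.mul
          continuous_id)).continuousOn
        intro s hs
        rcases eq_or_lt_of_le hs.1 with hs0 | hs0
        · rw [← hs0]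
          rw [hhdef]
          exact (continuousWithinAt_const.mul (sol.energy_cont0 hT h0 htT))
        · have hsT : s ∈ Set.Ioo 0 T := ⟨hs0, lt_of_le_of_lt hs.2 htT⟩
          have := ((sol.energy_deriv hT hsT).const_mul (1/2 : ℝ)).differentiableAt
          exact this.continuousAt.continuousWithinAt
      · -- differentiability on the interior
        rw [interior_Icc]
        intro s hs
        exact ((hφderiv s hs).differentiableAt).differentiableWithinAt
      · -- nonpositive derivative
        rw [interior_Icc]
        intro s hs
        rw [(hφderiv s hs).deriv]
        have hsT : s ∈ Set.Ioo 0 T := ⟨hs.1, lt_trans hs.2 htT⟩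
        have hsI : s ∈ Set.Ico (0:ℝ) T := Set.Ioo_subset_Ico_self hsT
        have hbnd := sol.integral_bound hε hμ hM₀ hM₁ hsI (hbd s hsI)
        have hDle : (∫ x in (0:ℝ)..1, (sol.u x s * sol.ut x s
            + (μ/6) * (sol.ux x s * sol.utx x s)
            + (μ^2/144) * (sol.uxx x s * sol.utxx x s))) ≤ K * hh s := by
          rw [hhdef]
          calc (∫ x in (0:ℝ)..1, (sol.u x s * sol.ut x s
              + (μ/6) * (sol.ux x s * sol.utx x s)
              + (μ^2/144) * (sol.uxx x s * sol.utxx x s)))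
              ≤ ((12*((ε*μ/16)*M₀ + (ε^2*μ/64)*M₀^2 + (ε^3*μ/128)*M₀^3)/μ
                  + 288*(((ε*μ/16)*M₀ + (ε^2*μ/64)*M₀^2 + (ε^3*μ/128)*M₀^3)
                      + (7*ε*μ^2/192)*M₁)/μ^2) / 2)
                * ∫ x in (0:ℝ)..1, ((sol.u x s)^2 + (μ/6) * (sol.ux x s)^2
                    + (μ^2/144) * (sol.uxx x s)^2) := hbnd
            _ = K * ((1/2) * (∫ x in (0:ℝ)..1, ((sol.u x s)^2 + (μ/6) * (sol.ux x s)^2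
                    + (μ^2/144) * (sol.uxx x s)^2))) := by
                rw [hK, hKa, hKb]; ring
        nlinarith [Real.exp_pos (-K * s), hDle,
          mul_le_mul_of_nonneg_right hDle (Real.exp_pos (-K * s)).le]
    have hmono := hanti (Set.left_mem_Icc.2 h0.le) (Set.right_mem_Icc.2 h0.le) h0.le
    -- hmono : φ t ≤ φ 0
    have hφ0 : φ 0 = hh 0 := by rw [hφ]; simp
    have hexp : Real.exp (-K * t) * Real.exp (K * t) = 1 := by
      rw [← Real.exp_add, neg_mul, neg_add_cancel, Real.exp_zero]
    calc hh t = hh t * (Real.exp (-K * t) * Real.exp (K * t)) := by rw [hexp, mul_one]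
      _ = (hh t * Real.exp (-K * t)) * Real.exp (K * t) := by ring
      _ = φ t * Real.exp (K * t) := by rw [hφ]
      _ ≤ φ 0 * Real.exp (K * t) :=
          mul_le_mul_of_nonneg_right hmono (Real.exp_pos _).le
      _ = hh 0 * Real.exp (K * t) := by rw [hφ0]
end

section
/- Let 0 < μ ≤ 12 and let u : ℝ → ℝ be continuously differentiable and 1-periodic. Then max_{x∈[0,1]} u(x)² ≤ (13/μ)·∫₀¹ (u(x)² + (μ/12)·u'(x)²) dx. -/
open Real intervalIntegral

lemma stmt7_ptwise (c A x y S C : ℝ) (hc : 0 < c) (hA : 0 < A) (hC : 0 < C)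
    (h1 : C^2 - S^2 = 1) :
    A / C^2 * x^2 + (A/c) * (S/C) * (2*x*y) ≤ A*(x^2 + (1/c^2)*y^2) := by
  have key : A*(x^2 + (1/c^2)*y^2) - (A / C^2 * x^2 + (A/c) * (S/C) * (2*x*y))
      = A * (S/C*x - y/c)^2 := by
    field_simp
    linear_combination (x^2*c^2) * h1
  nlinarith [mul_nonneg hA.le (sq_nonneg (S/C*x - y/c))]

/-- The key one-sided estimate with the hyperbolic-tangent weight. -/
lemma stmt7_aux (c A : ℝ) (hc : 0 < c) (hA : 0 < A)
    (u : ℝ → ℝ) (hu : Differentiable ℝ u) (hu' : Continuous (deriv u))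
    (b p q : ℝ) (hpq : p ≤ q) :
    (A/c) * (Real.sinh (c*(q-b)) / Real.cosh (c*(q-b))) * (u q)^2
      - (A/c) * (Real.sinh (c*(p-b)) / Real.cosh (c*(p-b))) * (u p)^2
      ≤ ∫ t in p..q, A * ((u t)^2 + (1/c^2) * (deriv u t)^2) := by
  set g : ℝ → ℝ := fun t => (A/c) * (Real.sinh (c*(t-b)) / Real.cosh (c*(t-b))) with hg_def
  have hcosh : ∀ t : ℝ, Real.cosh (c*(t-b)) ≠ 0 := fun t => (Real.cosh_pos _).ne'
  -- derivative of g
  have hg : ∀ t : ℝ, HasDerivAt g (A / (Real.cosh (c*(t-b)))^2) t := by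
    intro t
    have hlin : HasDerivAt (fun s : ℝ => c*(s-b)) c t := by
      simpa using ((hasDerivAt_id t).sub_const b).const_mul c
    have hs : HasDerivAt (fun s : ℝ => Real.sinh (c*(s-b)))
        (Real.cosh (c*(t-b)) * c) t := (Real.hasDerivAt_sinh _).comp t hlin
    have hco : HasDerivAt (fun s : ℝ => Real.cosh (c*(s-b)))
        (Real.sinh (c*(t-b)) * c) t := (Real.hasDerivAt_cosh _).comp t hlin
    have hdiv := (hs.div hco (hcosh t))
    have hthis := hdiv.const_mul (A/c)
    have h1 : Real.cosh (c*(t-b))^2 - Real.sinh (c*(t-b))^2 = 1 :=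
      Real.cosh_sq_sub_sinh_sq _
    have h2 : Real.cosh (c*(t-b)) * c * Real.cosh (c*(t-b))
        - Real.sinh (c*(t-b)) * (Real.sinh (c*(t-b)) * c) = c := by
      linear_combination c * h1
    rw [h2] at hthis
    exact hthis.congr_deriv (by field_simp)
  -- derivative of g * u^2
  have hgu : ∀ t : ℝ, HasDerivAt (fun s => g s * (u s)^2)
      (A / (Real.cosh (c*(t-b)))^2 * (u t)^2 + g t * (2 * u t * deriv u t)) t := by
    intro t
    have hu2 : HasDerivAt (fun s => (u s)^2) (2 * u t * deriv u t) t := by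
      have h := (hu t).hasDerivAt.mul (hu t).hasDerivAt
      have he : (fun s => (u s)^2) = fun y => u y * u y := by ext y; ring
      rw [he]; exact h.congr_deriv (by ring)
    exact (hg t).mul hu2
  -- continuity of g
  have hlc : Continuous (fun t : ℝ => c*(t-b)) :=
    continuous_const.mul (continuous_id.sub continuous_const)
  have hgc : Continuous g := by
    apply Continuous.mul continuous_const
    exact (Real.continuous_sinh.comp hlc).div
      (Real.continuous_cosh.comp hlc) hcosh
  have hFc : Continuous (fun t => A / (Real.cosh (c*(t-b)))^2 * (u t)^2
      + g t * (2 * u t * deriv u t)) := by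
    apply Continuous.add
    · exact (continuous_const.div ((Real.continuous_cosh.comp hlc).pow 2)
        (fun t => pow_ne_zero 2 (hcosh t))).mul (hu.continuous.pow 2)
    · exact hgc.mul ((continuous_const.mul hu.continuous).mul hu')
  have hFTC : ∫ t in p..q, (A / (Real.cosh (c*(t-b)))^2 * (u t)^2
      + g t * (2 * u t * deriv u t)) = g q * (u q)^2 - g p * (u p)^2 :=
    intervalIntegral.integral_eq_sub_of_hasDerivAt (fun t _ => hgu t)
      (hFc.intervalIntegrable p q)
  rw [← hFTC]
  apply intervalIntegral.integral_mono_on hpq (hFc.intervalIntegrable p q)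
    (((continuous_const.mul ((hu.continuous.pow 2).add
      (continuous_const.mul (hu'.pow 2)))).intervalIntegrable p q))
  intro t _
  simp only [hg_def]
  exact stmt7_ptwise c A (u t) (deriv u t) _ _ hc hA (Real.cosh_pos _)
    (Real.cosh_sq_sub_sinh_sq _)

/-- Sobolev-type embedding with explicit constant: for `0 < μ ≤ 12` and a continuously
differentiable 1-periodic `u`, `max_{[0,1]} u² ≤ (13/μ)·∫₀¹ (u² + (μ/12)(u')²)`. -/
theorem stmt7 (μ : ℝ) (hμ : 0 < μ) (hμ' : μ ≤ 12) (u : ℝ → ℝ)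
    (hu : ContDiff ℝ 1 u) (hp : Function.Periodic u 1) :
    ∀ x ∈ Set.Icc (0:ℝ) 1,
      (u x)^2 ≤ (13/μ) * ∫ y in (0:ℝ)..1, ((u y)^2 + (μ/12) * (deriv u y)^2) := by
  intro x _
  have hud : Differentiable ℝ u := hu.differentiable (by norm_num)
  have hu' : Continuous (deriv u) := hu.continuous_deriv le_rfl
  set c := Real.sqrt (12/μ) with hc_def
  have hc2 : c^2 = 12/μ := Real.sq_sqrt (by positivity)
  have hc1 : (1:ℝ) ≤ c := by
    rw [show (1:ℝ) = Real.sqrt 1 by simp [Real.sqrt_one]]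
    apply Real.sqrt_le_sqrt
    rw [le_div_iff₀ hμ]; linarith
  have hc0 : (0:ℝ) < c := lt_of_lt_of_le one_pos hc1
  set S := Real.sinh (c/2) with hS_def
  set C := Real.cosh (c/2) with hC_def
  have hS : 0 < S := Real.sinh_pos_iff.mpr (by positivity)
  have hC : 0 < C := Real.cosh_pos _
  set A := c*C/(2*S) with hA_def
  have hA : 0 < A := by positivity
  -- the two one-sided estimates
  have hL := stmt7_aux c A hc0 hA u hud hu' (x - 1/2) (x - 1/2) x (by linarith)
  have hR := stmt7_aux c A hc0 hA u hud hu' (x + 1/2) x (x + 1/2) (by linarith)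
  have htanh : (A/c) * (Real.sinh (c/2) / Real.cosh (c/2)) = 1/2 := by
    rw [hA_def, ← hS_def, ← hC_def]
    field_simp
  have e1 : c * (x - (x - 1/2)) = c/2 := by ring
  have e2 : c * ((x - 1/2) - (x - 1/2)) = 0 := by ring
  have e3 : c * (x - (x + 1/2)) = -(c/2) := by ring
  have e4 : c * ((x + 1/2) - (x + 1/2)) = 0 := by ring
  rw [e1, e2, htanh] at hL
  rw [e3, e4] at hR
  simp only [Real.sinh_zero, Real.sinh_neg, Real.cosh_neg, zero_div, mul_zero, zero_mul,
    sub_zero, zero_sub, neg_div, mul_neg, neg_mul, neg_neg] at hL hR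
  rw [htanh] at hR
  -- combine
  have hint : ∀ a b : ℝ, IntervalIntegrable
      (fun t => A * ((u t)^2 + (1/c^2) * (deriv u t)^2)) MeasureTheory.volume a b :=
    fun a b => ((continuous_const.mul ((hud.continuous.pow 2).add
      (continuous_const.mul (hu'.pow 2)))).intervalIntegrable a b)
  have hsum : (u x)^2 ≤ ∫ t in (x-1/2)..(x+1/2), A * ((u t)^2 + (1/c^2) * (deriv u t)^2) := by
    rw [← intervalIntegral.integral_add_adjacent_intervals (hint (x-1/2) x) (hint x (x+1/2))]
    linarith
  -- rewrite 1/c^2 = μ/12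
  have hcc : (1:ℝ)/c^2 = μ/12 := by
    rw [hc2]; field_simp
  rw [hcc] at hsum
  -- periodicity of integrand
  have hp' : Function.Periodic (deriv u) 1 := by
    intro t
    have h1 : HasDerivAt (fun s => u (s + 1)) (deriv u (t+1) * 1) t :=
      (hud (t+1)).hasDerivAt.comp t ((hasDerivAt_id t).add_const 1)
    have h2 : (fun s => u (s + 1)) = u := funext fun s => hp s
    rw [h2, mul_one] at h1
    exact h1.deriv.symm
  have hph : Function.Periodic (fun t => A * ((u t)^2 + (μ/12) * (deriv u t)^2)) 1 := by
    intro t; simp only [hp t, hp' t]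
  have hshift : (∫ t in (x-1/2)..(x+1/2), A * ((u t)^2 + (μ/12) * (deriv u t)^2))
      = ∫ t in (0:ℝ)..1, A * ((u t)^2 + (μ/12) * (deriv u t)^2) := by
    have h5 := hph.intervalIntegral_add_eq (x - 1/2) 0
    rw [show x - 1/2 + 1 = x + 1/2 by ring, zero_add] at h5
    exact h5
  rw [hshift] at hsum
  rw [intervalIntegral.integral_const_mul] at hsum
  -- final constant comparison
  have hIpos : 0 ≤ ∫ t in (0:ℝ)..1, ((u t)^2 + (μ/12) * (deriv u t)^2) := by
    apply intervalIntegral.integral_nonneg (by norm_num)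
    intro t _; positivity
  have hA13 : A ≤ 13/μ := by
    -- A = c C / (2 S) ≤ 13 c^2 / 12, i.e. 6 C ≤ 13 c S
    have hmu : 13/μ = 13*c^2/12 := by rw [hc2]; field_simp
    rw [hmu, hA_def, div_le_div_iff₀ (by positivity) (by norm_num : (0:ℝ) < 12)]
    have hCS : 6 * C ≤ 13 * S := by
      rw [hC_def, hS_def, Real.cosh_eq, Real.sinh_eq]
      have hE : Real.exp 1 ≤ Real.exp (c/2) * Real.exp (c/2) := by
        rw [← Real.exp_add]
        apply Real.exp_le_exp.mpr; linarith
      have hE1 : (2.7182818283:ℝ) < Real.exp 1 := Real.exp_one_gt_d9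
      have hEp : 0 < Real.exp (-(c/2)) := Real.exp_pos _
      have hprod : Real.exp (c/2) * Real.exp (-(c/2)) = 1 := by
        rw [← Real.exp_add]; simp
      nlinarith [Real.exp_pos (c/2)]
    nlinarith [mul_le_mul_of_nonneg_left hCS hc0.le,
      mul_nonneg hS.le (mul_nonneg hc0.le (sub_nonneg.mpr hc1))]
  calc (u x)^2 ≤ A * ∫ t in (0:ℝ)..1, ((u t)^2 + (μ/12) * (deriv u t)^2) := hsum
    _ ≤ (13/μ) * ∫ t in (0:ℝ)..1, ((u t)^2 + (μ/12) * (deriv u t)^2) :=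
        mul_le_mul_of_nonneg_right hA13 hIpos
end

section
/- Let 0 < μ ≤ 12 and let u be a classical 1-periodic solution of the moderate-amplitude surface wave equation on [0,T) with initial data u₀ = u(·,0). Set C₀ = ∫₀¹ (u₀(x)² + (μ/12)·u₀'(x)²) dx. Then u(x,t)² ≤ (13/μ)·C₀ for all x ∈ ℝ and t ∈ [0,T); in particular sup_{t∈[0,T), x∈[0,1]} |u(x,t)| < ∞. -/
open MeasureTheory intervalIntegral Set Function Topology

lemma myHasDerivAt_tanh (z : ℝ) : HasDerivAt Real.tanh (1 - Real.tanh z ^ 2) z := by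
  have h := (Real.hasDerivAt_sinh z).div (Real.hasDerivAt_cosh z) (Real.cosh_pos z).ne'
  have he : Real.tanh = fun z => Real.sinh z / Real.cosh z := by
    funext w; exact Real.tanh_eq_sinh_div_cosh w
  rw [he]
  refine h.congr_deriv ?_
  have h1 := Real.cosh_sq_sub_sinh_sq z
  have h2 := (Real.cosh_pos z).ne'
  field_simp

lemma myTanh_mono {a b : ℝ} (h : a ≤ b) : Real.tanh a ≤ Real.tanh b := by
  rw [Real.tanh_eq_sinh_div_cosh, Real.tanh_eq_sinh_div_cosh,
    div_le_div_iff₀ (Real.cosh_pos a) (Real.cosh_pos b)]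
  have hs : 0 ≤ Real.sinh (b - a) := Real.sinh_nonneg_iff.mpr (sub_nonneg.mpr h)
  rw [Real.sinh_sub] at hs
  linarith

lemma myTanh_half : (6:ℝ)/13 ≤ Real.tanh (1/2 : ℝ) := by
  rw [Real.tanh_eq_sinh_div_cosh, Real.sinh_eq, Real.cosh_eq, Real.exp_neg]
  have ha : (0:ℝ) < Real.exp (1/2) := Real.exp_pos _
  have h2 : Real.exp (1/2) * Real.exp (1/2) = Real.exp 1 := by
    rw [← Real.exp_add]; norm_num
  have he : (2.7182818283 : ℝ) < Real.exp 1 := Real.exp_one_gt_d9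
  rw [div_le_div_iff₀ (by norm_num) (by positivity)]
  have hia : Real.exp (1/2) * (Real.exp (1/2))⁻¹ = 1 := mul_inv_cancel₀ ha.ne'
  nlinarith [ha, h2, he, hia]

lemma myMemIci {T s : ℝ} (hs : s ∈ Set.Ico (0:ℝ) T) : Set.Ico (0:ℝ) T ∈ 𝓝[Set.Ici s] s := by
  apply mem_nhdsWithin.mpr
  exact ⟨Iio T, isOpen_Iio, hs.2, fun y hy => ⟨le_trans hs.1 hy.2, hy.1⟩⟩

lemma myMemIoi {T s : ℝ} (hs : s ∈ Set.Ico (0:ℝ) T) : Set.Ico (0:ℝ) T ∈ 𝓝[Set.Ioi s] s := by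
  apply mem_nhdsWithin.mpr
  exact ⟨Iio T, isOpen_Iio, hs.2, fun y hy => ⟨le_trans hs.1 (le_of_lt hy.2), hy.1⟩⟩

lemma myAntideriv {T : ℝ} {f g : ℝ → ℝ}
    (hd : ∀ s ∈ Set.Ico (0:ℝ) T, HasDerivWithinAt f (g s) (Set.Ici s) s)
    (hgc : ContinuousOn g (Set.Ico (0:ℝ) T))
    (hfc : ContinuousOn f (Set.Ico (0:ℝ) T))
    {t : ℝ} (ht : t ∈ Set.Ico (0:ℝ) T) :
    f t = f 0 + ∫ s in (0:ℝ)..t, g s := by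
  obtain ⟨ht0, htT⟩ := ht
  have hsub : Icc (0:ℝ) t ⊆ Ico (0:ℝ) T := fun y hy => ⟨hy.1, lt_of_le_of_lt hy.2 htT⟩
  have key : ∀ y ∈ Icc (0:ℝ) t, f y = f 0 + ∫ s in (0:ℝ)..y, g s := by
    apply eq_of_has_deriv_right_eq (f' := g)
    · intro s hs
      exact hd s ⟨hs.1, lt_of_lt_of_le hs.2 (le_of_lt htT)⟩
    · intro s hs
      have hsI : s ∈ Ico (0:ℝ) T := ⟨hs.1, lt_of_lt_of_le hs.2 (le_of_lt htT)⟩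
      have hint : IntervalIntegrable g volume 0 s := by
        apply ContinuousOn.intervalIntegrable
        rw [uIcc_of_le hs.1]
        exact hgc.mono (fun y hy => ⟨hy.1, lt_of_le_of_lt hy.2 hsI.2⟩)
      have hmeas : StronglyMeasurableAtFilter g (𝓝[Ioi s] s) volume :=
        ⟨Ico 0 T, myMemIoi hsI, hgc.aestronglyMeasurable measurableSet_Ico⟩
      have hb : ContinuousWithinAt g (Ioi s) s :=
        (hgc s hsI).mono_of_mem_nhdsWithin (myMemIoi hsI)
      exact ((integral_hasDerivWithinAt_right (t := Ioi s) hint hmeas hb).const_add (f 0))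
    · exact hfc.mono hsub
    · apply continuousOn_const.add
      have hii : IntegrableOn g (uIcc (0:ℝ) t) volume := by
        rw [uIcc_of_le ht0]
        exact (hgc.mono hsub).integrableOn_compact isCompact_Icc
      have h2 := continuousOn_primitive_interval hii
      rw [uIcc_of_le ht0] at h2
      exact h2
    · simp
  exact key t ⟨ht0, le_refl t⟩


/-- A priori bound on the amplitude: for `0 < μ ≤ 12`, a classical 1-periodic solution with
initial energy `C₀ = ∫₀¹ (u₀² + (μ/12)u₀'²)` satisfies `u(x,t)² ≤ (13/μ)·C₀` for all `x` and
`t ∈ [0,T)`; in particular the solution stays uniformly bounded. -/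
theorem stmt8 (ε μ T : ℝ) (hε : 0 < ε) (hμ : 0 < μ) (hμ' : μ ≤ 12) (hT : 0 < T)
    (sol : ClassicalSol ε μ T) :
    (∀ (x : ℝ), ∀ t ∈ Set.Ico (0:ℝ) T,
      (sol.u x t)^2
        ≤ (13/μ) * ∫ y in (0:ℝ)..1, ((sol.u y 0)^2 + (μ/12) * (sol.ux y 0)^2)) ∧
    ∃ M : ℝ, ∀ t ∈ Set.Ico (0:ℝ) T, ∀ x ∈ Set.Icc (0:ℝ) 1, |sol.u x t| ≤ M := by
  obtain ⟨u, ux, uxx, uxxx, ut, utx, utxx, per, hux, huxx, huxxx, hut, hutx, hutxx,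
    contu, contux, contuxx, contuxxx, contut, contutx, contutxx, eqn⟩ := sol
  dsimp only at *
  have h0I : (0:ℝ) ∈ Set.Ico (0:ℝ) T := ⟨le_refl 0, hT⟩
  -- slice continuity in x
  have scu : ∀ t ∈ Set.Ico (0:ℝ) T, Continuous (fun y => u y t) :=
    fun t ht => continuous_iff_continuousAt.mpr (fun y => (hux y t ht).continuousAt)
  have scux : ∀ t ∈ Set.Ico (0:ℝ) T, Continuous (fun y => ux y t) :=
    fun t ht => continuous_iff_continuousAt.mpr (fun y => (huxx y t ht).continuousAt)
  have scut : ∀ t ∈ Set.Ico (0:ℝ) T, Continuous (fun y => ut y t) :=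
    fun t ht => continuous_iff_continuousAt.mpr (fun y => (hutx y t ht).continuousAt)
  have scutx : ∀ t ∈ Set.Ico (0:ℝ) T, Continuous (fun y => utx y t) :=
    fun t ht => continuous_iff_continuousAt.mpr (fun y => (hutxx y t ht).continuousAt)
  -- slice continuity in t
  have tslice : ∀ (f : ℝ → ℝ → ℝ),
      ContinuousOn (fun p : ℝ × ℝ => f p.1 p.2) (Set.univ ×ˢ Set.Ico (0:ℝ) T) →
      ∀ x : ℝ, ContinuousOn (fun s => f x s) (Set.Ico (0:ℝ) T) := by
    intro f hf x
    exact hf.comp ((continuous_const.prodMk continuous_id).continuousOn)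
      (fun s hs => ⟨mem_univ _, hs⟩)
  have tcu := tslice u contu
  have tcux := tslice ux contux
  have tcut := tslice ut contut
  have tcutx := tslice utx contutx
  -- periodicity of derivatives
  have perDer : ∀ (f g : ℝ → ℝ), (∀ x, f (x+1) = f x) → (∀ x, HasDerivAt f (g x) x) →
      ∀ x, g (x+1) = g x := by
    intro f g hf hg x
    have h1 : HasDerivAt (fun y => f (y+1)) (g (x+1)) x := by
      exact (hg (x+1)).comp_add_const x 1
    have h2 : (fun y => f (y+1)) = f := funext hf
    rw [h2] at h1
    exact h1.unique (hg x)
  have perx : ∀ t ∈ Set.Ico (0:ℝ) T, ∀ x, ux (x+1) t = ux x t :=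
    fun t ht => perDer (fun y => u y t) (fun y => ux y t) (per t ht) (fun y => hux y t ht)
  have perxx : ∀ t ∈ Set.Ico (0:ℝ) T, ∀ x, uxx (x+1) t = uxx x t :=
    fun t ht => perDer (fun y => ux y t) (fun y => uxx y t) (perx t ht) (fun y => huxx y t ht)
  have perut : ∀ t ∈ Set.Ico (0:ℝ) T, ∀ x, ut (x+1) t = ut x t := by
    intro t ht x
    have hu : UniqueDiffWithinAt ℝ (Set.Ico (0:ℝ) T) t := (uniqueDiffOn_Ico 0 T) t ht
    have h1 : HasDerivWithinAt (fun s => u x s) (ut (x+1) t) (Set.Ico (0:ℝ) T) t :=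
      (hut (x+1) t ht).congr (fun s hs => (per s hs x).symm) ((per t ht x).symm)
    exact (h1.derivWithin hu).symm.trans ((hut x t ht).derivWithin hu)
  have perutx : ∀ t ∈ Set.Ico (0:ℝ) T, ∀ x, utx (x+1) t = utx x t :=
    fun t ht => perDer (fun y => ut y t) (fun y => utx y t) (perut t ht) (fun y => hutx y t ht)
  -- the spatial identity: for each t, ∫₀¹ G(·,t) = 0
  have spatial : ∀ t ∈ Set.Ico (0:ℝ) T,
      (∫ y in (0:ℝ)..1, (2*u y t*ut y t + μ/6*(ux y t*utx y t))) = 0 := by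
    intro t ht
    have hPd : ∀ y : ℝ, HasDerivAt (fun z =>
        -(u z t)^2 - ε*(u z t)^3 + 3/16*ε^2*(u z t)^4 - 3/40*ε^3*(u z t)^5
          - μ/6*(u z t * uxx z t) + μ/12*(ux z t)^2 + μ/6*(u z t * utx z t)
          - 7*ε*μ/12*((u z t)^2 * uxx z t))
        (2*u y t*ut y t + μ/6*(ux y t*utx y t)) y := by
      intro y
      have h1 := hux y t ht
      have h2 := huxx y t ht
      have h3 := huxxx y t ht
      have h4 := hutx y t ht
      have h5 := hutxx y t ht
      have hDa := (h1.pow 2).neg.sub ((h1.pow 3).const_mul ε)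
      have hDb := hDa.add ((h1.pow 4).const_mul (3/16*ε^2))
      have hDc := hDb.sub ((h1.pow 5).const_mul (3/40*ε^3))
      have hDd := hDc.sub ((h1.mul h3).const_mul (μ/6))
      have hDe := hDd.add ((h2.pow 2).const_mul (μ/12))
      have hDf := hDe.add ((h1.mul h5).const_mul (μ/6))
      have hD := hDf.sub (((h1.pow 2).mul h3).const_mul (7*ε*μ/12))
      have he := eqn y t ht
      apply hD.congr_deriv
      push_cast
      simp only [Pi.pow_apply]
      linear_combination he * (-2 * u y t)
    have hgc : Continuous (fun y => 2*u y t*ut y t + μ/6*(ux y t*utx y t)) :=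
      ((continuous_const.mul (scu t ht)).mul (scut t ht)).add
        (continuous_const.mul ((scux t ht).mul (scutx t ht)))
    rw [integral_eq_sub_of_hasDerivAt (fun y _ => hPd y) (hgc.intervalIntegrable 0 1)]
    have e0 : u 1 t = u 0 t := by simpa using per t ht 0
    have e1 : ux 1 t = ux 0 t := by simpa using perx t ht 0
    have e2 : uxx 1 t = uxx 0 t := by simpa using perxx t ht 0
    have e3 : utx 1 t = utx 0 t := by simpa using perutx t ht 0
    rw [e0, e1, e2, e3]
    ring
  -- u as t-antiderivative of ut
  have hu_t : ∀ (x : ℝ), ∀ t ∈ Set.Ico (0:ℝ) T,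
      u x t = u x 0 + ∫ s in (0:ℝ)..t, ut x s := by
    intro x t ht
    exact myAntideriv (fun s hs => (hut x s hs).mono_of_mem_nhdsWithin (myMemIci hs))
      (tcut x) (tcu x) ht
  -- differentiation under the integral sign: ux as antiderivative of utx
  have hux_t : ∀ (x : ℝ), ∀ t ∈ Set.Ico (0:ℝ) T,
      ux x t = ux x 0 + ∫ s in (0:ℝ)..t, utx x s := by
    intro x t ht
    have hIsub : Icc (0:ℝ) t ⊆ Set.Ico (0:ℝ) T :=
      fun s hs => ⟨hs.1, lt_of_le_of_lt hs.2 ht.2⟩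
    obtain ⟨C, hC⟩ : ∃ C, ∀ p ∈ Icc (x-1) (x+1) ×ˢ Icc (0:ℝ) t, |utx p.1 p.2| ≤ C := by
      have hcomp : IsCompact (Icc (x-1) (x+1) ×ˢ Icc (0:ℝ) t) :=
        isCompact_Icc.prod isCompact_Icc
      have hsub : Icc (x-1) (x+1) ×ˢ Icc (0:ℝ) t ⊆ Set.univ ×ˢ Set.Ico (0:ℝ) T :=
        Set.prod_mono (subset_univ _) hIsub
      obtain ⟨C, hC⟩ := hcomp.exists_bound_of_continuousOn (contutx.mono hsub)
      exact ⟨C, fun p hp => by simpa [Real.norm_eq_abs] using hC p hp⟩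
    have hIoc : Set.uIoc (0:ℝ) t = Set.Ioc 0 t := uIoc_of_le ht.1
    have key := intervalIntegral.hasDerivAt_integral_of_dominated_loc_of_deriv_le
      (F := fun x' s => ut x' s) (F' := fun x' s => utx x' s) (x₀ := x) (a := 0) (b := t)
      (bound := fun _ => C) (μ := volume) (Metric.ball_mem_nhds x zero_lt_one)
      (Filter.Eventually.of_forall (fun x' => by
        rw [hIoc]
        exact ((tcut x').mono (Ioc_subset_Icc_self.trans hIsub)).aestronglyMeasurable
          measurableSet_Ioc))
      (by
        apply ContinuousOn.intervalIntegrable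
        rw [uIcc_of_le ht.1]
        exact (tcut x).mono hIsub)
      (by
        rw [hIoc]
        exact ((tcutx x).mono (Ioc_subset_Icc_self.trans hIsub)).aestronglyMeasurable
          measurableSet_Ioc)
      (Filter.Eventually.of_forall (fun s hs x' (hx' : x' ∈ Metric.ball x 1) => by
        rw [hIoc] at hs
        have hx'mem : x' ∈ Icc (x-1) (x+1) := by
          rw [Metric.mem_ball, Real.dist_eq] at hx'
          constructor <;> [linarith [abs_lt.mp hx'] ; linarith [(abs_lt.mp hx').2]]
        simpa [Real.norm_eq_abs] using hC (x', s) ⟨hx'mem, Ioc_subset_Icc_self hs⟩))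
      intervalIntegrable_const
      (Filter.Eventually.of_forall (fun s hs x' _ => by
        rw [hIoc] at hs
        exact hutx x' s (Ioc_subset_Icc_self.trans hIsub hs)))
    have h2 : HasDerivAt (fun x' => u x' t) (ux x 0 + ∫ s in (0:ℝ)..t, utx x s) x := by
      have heq : (fun x' => u x' t) = fun x' => u x' 0 + ∫ s in (0:ℝ)..t, ut x' s :=
        funext (fun x' => hu_t x' t ht)
      rw [heq]
      exact (hux x 0 h0I).add key.2
    exact (hux x t ht).unique h2
  -- right-derivative of t ↦ ux x t
  have hux_rderiv : ∀ (x : ℝ), ∀ s ∈ Set.Ico (0:ℝ) T,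
      HasDerivWithinAt (fun s' => ux x s') (utx x s) (Set.Ici s) s := by
    intro x s hs
    have hint : IntervalIntegrable (fun σ => utx x σ) volume 0 s := by
      apply ContinuousOn.intervalIntegrable
      rw [uIcc_of_le hs.1]
      exact (tcutx x).mono (fun y hy => ⟨hy.1, lt_of_le_of_lt hy.2 hs.2⟩)
    have hmeas : StronglyMeasurableAtFilter (fun σ => utx x σ) (𝓝[Ioi s] s) volume :=
      ⟨Set.Ico 0 T, myMemIoi hs, (tcutx x).aestronglyMeasurable measurableSet_Ico⟩
    have hb : ContinuousWithinAt (fun σ => utx x σ) (Ioi s) s :=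
      ((tcutx x) s hs).mono_of_mem_nhdsWithin (myMemIoi hs)
    have hF : HasDerivWithinAt (fun s' => ux x 0 + ∫ σ in (0:ℝ)..s', utx x σ)
        (utx x s) (Set.Ici s) s :=
      (integral_hasDerivWithinAt_right (t := Ioi s) hint hmeas hb).const_add (ux x 0)
    have hmem : Set.Ico s T ∈ 𝓝[Set.Ici s] s := by
      apply mem_nhdsWithin.mpr
      exact ⟨Iio T, isOpen_Iio, hs.2, fun y hy => ⟨hy.2, hy.1⟩⟩
    refine ((hF.mono (Set.Ico_subset_Ici_self)).congr ?_ ?_).mono_of_mem_nhdsWithin hmem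
    · intro y hy
      exact hux_t x y ⟨le_trans hs.1 hy.1, hy.2⟩
    · exact hux_t x s hs
  -- pointwise-in-x energy identity in t
  have hF_t : ∀ (x : ℝ), ∀ t ∈ Set.Ico (0:ℝ) T,
      (u x t)^2 + μ/12*(ux x t)^2
        = ((u x 0)^2 + μ/12*(ux x 0)^2)
          + ∫ s in (0:ℝ)..t, (2*u x s*ut x s + μ/6*(ux x s*utx x s)) := by
    intro x t ht
    apply myAntideriv (f := fun s => (u x s)^2 + μ/12*(ux x s)^2)
      (g := fun s => 2*u x s*ut x s + μ/6*(ux x s*utx x s))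
    · intro s hs
      have h1 : HasDerivWithinAt (fun s' => u x s') (ut x s) (Set.Ici s) s :=
        (hut x s hs).mono_of_mem_nhdsWithin (myMemIci hs)
      have h2 := hux_rderiv x s hs
      have hD := (h1.pow 2).add ((h2.pow 2).const_mul (μ/12))
      refine hD.congr_deriv ?_
      push_cast
      ring
    · exact (((continuousOn_const.mul (tcu x)).mul (tcut x))).add
        (continuousOn_const.mul ((tcux x).mul (tcutx x)))
    · exact ((tcu x).pow 2).add (continuousOn_const.mul ((tcux x).pow 2))
    · exact ht
  -- energy conservation
  have Econst : ∀ t ∈ Set.Ico (0:ℝ) T,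
      (∫ y in (0:ℝ)..1, ((u y t)^2 + μ/12*(ux y t)^2))
        = ∫ y in (0:ℝ)..1, ((u y 0)^2 + μ/12*(ux y 0)^2) := by
    intro t ht
    have hint0 : IntervalIntegrable (fun y => (u y 0)^2 + μ/12*(ux y 0)^2) volume 0 1 :=
      (((scu 0 h0I).pow 2).add (continuous_const.mul ((scux 0 h0I).pow 2))).intervalIntegrable 0 1
    have hintt : IntervalIntegrable (fun y => (u y t)^2 + μ/12*(ux y t)^2) volume 0 1 :=
      (((scu t ht).pow 2).add (continuous_const.mul ((scux t ht).pow 2))).intervalIntegrable 0 1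
    have hdiff : (∫ y in (0:ℝ)..1, (((u y t)^2 + μ/12*(ux y t)^2)
        - ((u y 0)^2 + μ/12*(ux y 0)^2)))
        = (∫ y in (0:ℝ)..1, ((u y t)^2 + μ/12*(ux y t)^2))
          - ∫ y in (0:ℝ)..1, ((u y 0)^2 + μ/12*(ux y 0)^2) :=
      intervalIntegral.integral_sub hintt hint0
    have hzero : (∫ y in (0:ℝ)..1, (((u y t)^2 + μ/12*(ux y t)^2)
        - ((u y 0)^2 + μ/12*(ux y 0)^2))) = 0 := by
      have hcong : (∫ y in (0:ℝ)..1, (((u y t)^2 + μ/12*(ux y t)^2)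
          - ((u y 0)^2 + μ/12*(ux y 0)^2)))
          = ∫ y in (0:ℝ)..1, (∫ s in (0:ℝ)..t, (2*u y s*ut y s + μ/6*(ux y s*utx y s))) := by
        apply intervalIntegral.integral_congr
        intro y _
        have := hF_t y t ht
        dsimp only
        linarith
      rw [hcong]
      -- Fubini
      have hGcont : ContinuousOn (fun p : ℝ × ℝ =>
          2*u p.1 p.2*ut p.1 p.2 + μ/6*(ux p.1 p.2*utx p.1 p.2))
          (Set.univ ×ˢ Set.Ico (0:ℝ) T) :=
        ((continuousOn_const.mul contu).mul contut).add
          (continuousOn_const.mul (contux.mul contutx))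
      have hsubK : Icc (0:ℝ) 1 ×ˢ Icc (0:ℝ) t ⊆ Set.univ ×ˢ Set.Ico (0:ℝ) T :=
        Set.prod_mono (subset_univ _) (fun s hs => ⟨hs.1, lt_of_le_of_lt hs.2 ht.2⟩)
      have hInt : IntegrableOn (fun p : ℝ × ℝ =>
          2*u p.1 p.2*ut p.1 p.2 + μ/6*(ux p.1 p.2*utx p.1 p.2))
          (Icc (0:ℝ) 1 ×ˢ Icc (0:ℝ) t) volume :=
        (hGcont.mono hsubK).integrableOn_compact (isCompact_Icc.prod isCompact_Icc)
      have hInt2 : Integrable (Function.uncurry (fun y s =>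
          2*u y s*ut y s + μ/6*(ux y s*utx y s)))
          ((volume.restrict (Ioc (0:ℝ) 1)).prod (volume.restrict (Ioc (0:ℝ) t))) := by
        rw [Measure.prod_restrict, ← Measure.volume_eq_prod]
        exact hInt.mono_set (Set.prod_mono Ioc_subset_Icc_self Ioc_subset_Icc_self)
      rw [intervalIntegral.integral_of_le zero_le_one]
      simp_rw [intervalIntegral.integral_of_le ht.1]
      rw [MeasureTheory.integral_integral_swap hInt2]
      have hz : ∀ s ∈ Ioc (0:ℝ) t,
          (∫ y in Ioc (0:ℝ) 1, (2*u y s*ut y s + μ/6*(ux y s*utx y s))) = 0 := by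
        intro s hs
        have hsI : s ∈ Set.Ico (0:ℝ) T := ⟨le_of_lt hs.1, lt_of_le_of_lt hs.2 ht.2⟩
        have hsp := spatial s hsI
        rw [intervalIntegral.integral_of_le zero_le_one] at hsp
        exact hsp
      rw [setIntegral_congr_fun measurableSet_Ioc hz]
      simp
    linarith [hdiff, hzero]
  -- the weighted Sobolev inequality
  have sob : ∀ t ∈ Set.Ico (0:ℝ) T, ∀ x : ℝ,
      (u x t)^2 ≤ 13/μ * ∫ y in (0:ℝ)..1, ((u y t)^2 + μ/12*(ux y t)^2) := by
    intro t ht x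
    set r := Real.sqrt (μ/12) with hrdef
    have hr0 : 0 < r := Real.sqrt_pos.mpr (by positivity)
    have hr2 : r^2 = μ/12 := Real.sq_sqrt (by positivity)
    have hr1 : r ≤ 1 := by nlinarith
    set φ : ℝ → ℝ := fun y => Real.tanh ((y - (x + 1/2))/r) with hφdef
    have hφd : ∀ y, HasDerivAt φ ((1 - φ y^2)/r) y := by
      intro y
      have hin : HasDerivAt (fun y => (y - (x+1/2))/r) (1/r) y :=
        ((hasDerivAt_id y).sub_const _).div_const r
      have hcomp := (myHasDerivAt_tanh ((y - (x+1/2))/r)).comp y hin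
      apply hcomp.congr_deriv
      rw [hφdef]
      ring
    have hφcont : Continuous φ := continuous_iff_continuousAt.mpr
      (fun y => (hφd y).continuousAt)
    have hΨd : ∀ y, HasDerivAt (fun z => r * ((u z t)^2 * φ z))
        (2*r*(u y t)*(ux y t)*(φ y) + (u y t)^2*(1 - φ y^2)) y := by
      intro y
      have hD := (((hux y t ht).pow 2).mul (hφd y)).const_mul r
      apply hD.congr_deriv
      push_cast
      simp only [Pi.pow_apply]
      field_simp
    have hΨcont : Continuous (fun y => 2*r*(u y t)*(ux y t)*(φ y) + (u y t)^2*(1 - φ y^2)) := by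
      have h1 := scu t ht
      have h2 := scux t ht
      fun_prop
    have hFTC : (∫ y in x..x+1, (2*r*(u y t)*(ux y t)*(φ y) + (u y t)^2*(1 - φ y^2)))
        = r * ((u (x+1) t)^2 * φ (x+1)) - r * ((u x t)^2 * φ x) :=
      integral_eq_sub_of_hasDerivAt (fun y _ => hΨd y) (hΨcont.intervalIntegrable x (x+1))
    have hQ : ∀ y, (((u y t)^2 + μ/12*(ux y t)^2)
        - (2*r*(u y t)*(ux y t)*(φ y) + (u y t)^2*(1 - φ y^2)))
        = (r*ux y t - u y t*φ y)^2 := by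
      intro y
      linear_combination (-(ux y t)^2) * hr2
    have hηcont : Continuous (fun y => (u y t)^2 + μ/12*(ux y t)^2) :=
      ((scu t ht).pow 2).add (continuous_const.mul ((scux t ht).pow 2))
    have hpos : 0 ≤ ∫ y in x..x+1, (((u y t)^2 + μ/12*(ux y t)^2)
        - (2*r*(u y t)*(ux y t)*(φ y) + (u y t)^2*(1 - φ y^2))) := by
      apply intervalIntegral.integral_nonneg (by linarith)
      intro y _
      rw [hQ y]
      positivity
    have hsplit : (∫ y in x..x+1, (((u y t)^2 + μ/12*(ux y t)^2)
        - (2*r*(u y t)*(ux y t)*(φ y) + (u y t)^2*(1 - φ y^2))))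
        = (∫ y in x..x+1, ((u y t)^2 + μ/12*(ux y t)^2))
          - ∫ y in x..x+1, (2*r*(u y t)*(ux y t)*(φ y) + (u y t)^2*(1 - φ y^2)) :=
      intervalIntegral.integral_sub (hηcont.intervalIntegrable _ _)
        (hΨcont.intervalIntegrable _ _)
    have hperiod : (∫ y in x..x+1, ((u y t)^2 + μ/12*(ux y t)^2))
        = ∫ y in (0:ℝ)..1, ((u y t)^2 + μ/12*(ux y t)^2) := by
      have hper : Function.Periodic (fun y => (u y t)^2 + μ/12*(ux y t)^2) 1 := by
        intro y
        have e1 : u (y+1) t = u y t := per t ht y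
        dsimp only
        rw [e1, perx t ht y]
      have := hper.intervalIntegral_add_eq x 0
      simpa using this
    set c := (1/2)/r with hcdef
    have hφ1 : φ (x+1) = Real.tanh c := by
      rw [hφdef]
      dsimp only
      rw [hcdef]
      congr 1
      ring
    have hφ0 : φ x = -Real.tanh c := by
      rw [hφdef]
      dsimp only
      rw [show (x - (x+1/2))/r = -((1/2)/r) by ring, Real.tanh_neg, hcdef]
    have hΨval : r * ((u (x+1) t)^2 * φ (x+1)) - r * ((u x t)^2 * φ x)
        = 2*r*Real.tanh c*(u x t)^2 := by
      have e3 : u (x+1) t = u x t := per t ht x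
      rw [hφ1, hφ0, e3]
      ring
    have hmain : 2*r*Real.tanh c*(u x t)^2
        ≤ ∫ y in (0:ℝ)..1, ((u y t)^2 + μ/12*(ux y t)^2) := by
      rw [hsplit, hFTC, hΨval, hperiod] at hpos
      linarith
    have htc : (6:ℝ)/13 ≤ Real.tanh c := by
      refine le_trans myTanh_half (myTanh_mono ?_)
      rw [hcdef, le_div_iff₀ hr0]
      nlinarith
    have ha : μ/13 ≤ 2*r*Real.tanh c := by
      have h1 : 2*r*(6/13) ≤ 2*r*Real.tanh c := by nlinarith
      nlinarith [mul_nonneg hr0.le (sub_nonneg.mpr hr1)]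
    have hE0 : μ/13*(u x t)^2 ≤ ∫ y in (0:ℝ)..1, ((u y t)^2 + μ/12*(ux y t)^2) :=
      le_trans (mul_le_mul_of_nonneg_right ha (sq_nonneg (u x t))) hmain
    have hone : 13/μ*(μ/13) = 1 := by field_simp
    calc (u x t)^2 = 13/μ*(μ/13)*(u x t)^2 := by rw [hone, one_mul]
      _ = 13/μ*(μ/13*(u x t)^2) := by ring
      _ ≤ 13/μ*∫ y in (0:ℝ)..1, ((u y t)^2 + μ/12*(ux y t)^2) :=
          mul_le_mul_of_nonneg_left hE0 (by positivity)
  have part1 : ∀ (x : ℝ), ∀ t ∈ Set.Ico (0:ℝ) T,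
      (u x t)^2 ≤ 13/μ * ∫ y in (0:ℝ)..1, ((u y 0)^2 + μ/12*(ux y 0)^2) := by
    intro x t ht
    have := sob t ht x
    rwa [Econst t ht] at this
  refine ⟨part1, ⟨Real.sqrt (13/μ * ∫ y in (0:ℝ)..1, ((u y 0)^2 + μ/12*(ux y 0)^2)), ?_⟩⟩
  intro t ht x _
  rw [← Real.sqrt_sq_eq_abs]
  exact Real.sqrt_le_sqrt (part1 x t ht)
end

section
/- Let T > 0 and let u : ℝ×[0,T) → ℝ be 1-periodic in its first variable with u, u_x and u_{tx} continuous on ℝ×[0,T). Define S(t) = sup_{x∈ℝ} u_x(x,t). Then: (i) for every t ∈ [0,T) there exists at least one point ξ(t) ∈ [0,1] with u_x(ξ(t),t) = S(t); (ii) S is locally Lipschitz on [0,T), hence differentiable at almost every t ∈ (0,T); and (iii) for almost every t ∈ (0,T), S'(t) = u_{tx}(ξ,t) for every point ξ at which u_x(·,t) attains its maximum S(t). -/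
open Set MeasureTheory


/-- Structure theorem for the supremum of the slope (Constantin–Escher): if `u` is 1-periodic
in `x` with `u`, `u_x`, `u_{tx}` continuous on `ℝ × [0,T)`, then `S(t) = sup_x u_x(x,t)` is
attained at some `ξ(t) ∈ [0,1]`, `S` is locally Lipschitz on `[0,T)` (hence differentiable
a.e.), and for a.e. `t ∈ (0,T)` one has `S'(t) = u_{tx}(ξ,t)` at every maximizer `ξ`. -/
theorem stmt9 (T : ℝ) (hT : 0 < T) (u ux utx : ℝ → ℝ → ℝ)
    (hper : ∀ t ∈ Set.Ico (0:ℝ) T, Function.Periodic (fun x => u x t) 1)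
    (hux : ∀ (x : ℝ), ∀ t ∈ Set.Ico (0:ℝ) T, HasDerivAt (fun x' => u x' t) (ux x t) x)
    (hutx : ∀ (x : ℝ), ∀ t ∈ Set.Ico (0:ℝ) T,
      HasDerivWithinAt (fun t' => ux x t') (utx x t) (Set.Ico (0:ℝ) T) t)
    (hcu : ContinuousOn (fun p : ℝ × ℝ => u p.1 p.2) (Set.univ ×ˢ Set.Ico (0:ℝ) T))
    (hcux : ContinuousOn (fun p : ℝ × ℝ => ux p.1 p.2) (Set.univ ×ˢ Set.Ico (0:ℝ) T))
    (hcutx : ContinuousOn (fun p : ℝ × ℝ => utx p.1 p.2) (Set.univ ×ˢ Set.Ico (0:ℝ) T))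
    (S : ℝ → ℝ) (hS : ∀ t, S t = sSup (Set.range fun x => ux x t)) :
    -- (i) the supremum is attained at some point of [0,1]
    (∀ t ∈ Set.Ico (0:ℝ) T, ∃ ξ ∈ Set.Icc (0:ℝ) 1, ux ξ t = S t) ∧
    -- (ii) S is locally Lipschitz on [0,T), hence differentiable almost everywhere
    (∀ a b : ℝ, 0 ≤ a → a ≤ b → b < T →
      ∃ L : NNReal, LipschitzOnWith L S (Set.Icc a b)) ∧
    (∀ᵐ t ∂MeasureTheory.volume, t ∈ Set.Ioo (0:ℝ) T → DifferentiableAt ℝ S t) ∧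
    -- (iii) a.e. the derivative of S is u_{tx} evaluated at any maximizer
    (∀ᵐ t ∂MeasureTheory.volume, t ∈ Set.Ioo (0:ℝ) T →
      ∀ ξ : ℝ, ux ξ t = S t → deriv S t = utx ξ t) := by
  -- ux is periodic in x
  have huxper : ∀ t ∈ Set.Ico (0:ℝ) T, ∀ x, ux (x + 1) t = ux x t := by
    intro t ht x
    have h1 : HasDerivAt (fun x' => u (x' + 1) t) (ux (x + 1) t * 1) x :=
      by have := (hux (x + 1) t ht).comp x ((hasDerivAt_id x).add_const 1); exact this
    have h2 : (fun x' => u (x' + 1) t) = fun x' => u x' t := funext fun x' => hper t ht x'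
    rw [h2] at h1
    have := (hux x t ht).unique h1
    linarith
  -- ux continuous in x at fixed t
  have huxc : ∀ t ∈ Set.Ico (0:ℝ) T, Continuous (fun x => ux x t) := by
    intro t ht
    exact hcux.comp_continuous (continuous_id.prodMk continuous_const)
      (fun x => ⟨mem_univ x, ht⟩)
  -- key : the sup is attained at some ξ ∈ [0,1], as a greatest element
  have key : ∀ t ∈ Set.Ico (0:ℝ) T, ∃ ξ ∈ Set.Icc (0:ℝ) 1,
      IsGreatest (Set.range fun x => ux x t) (ux ξ t) := by
    intro t ht
    obtain ⟨ξ, hξ, hmax⟩ := isCompact_Icc.exists_isMaxOn (nonempty_Icc.2 zero_le_one)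
      ((huxc t ht).continuousOn : ContinuousOn (fun x => ux x t) (Icc 0 1))
    refine ⟨ξ, hξ, ⟨⟨ξ, rfl⟩, ?_⟩⟩
    rintro y ⟨x, rfl⟩
    have hp : Function.Periodic (fun x => ux x t) 1 := fun x => huxper t ht x
    obtain ⟨y, hy, hxy⟩ := hp.exists_mem_Ico₀ one_pos x
    show ux x t ≤ ux ξ t
    rw [hxy]
    exact hmax (Ico_subset_Icc_self hy)
  have hSval : ∀ t ∈ Set.Ico (0:ℝ) T, ∀ ξ ∈ Set.Icc (0:ℝ) 1,
      IsGreatest (Set.range fun x => ux x t) (ux ξ t) → S t = ux ξ t := by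
    intro t ht ξ _ hg
    rw [hS t, hg.csSup_eq]
  -- any value is ≤ S t
  have hle : ∀ t ∈ Set.Ico (0:ℝ) T, ∀ x, ux x t ≤ S t := by
    intro t ht x
    obtain ⟨ξ, hξ, hg⟩ := key t ht
    rw [hSval t ht ξ hξ hg]
    exact hg.2 ⟨x, rfl⟩
  -- part (i)
  have part1 : ∀ t ∈ Set.Ico (0:ℝ) T, ∃ ξ ∈ Set.Icc (0:ℝ) 1, ux ξ t = S t := by
    intro t ht
    obtain ⟨ξ, hξ, hg⟩ := key t ht
    exact ⟨ξ, hξ, (hSval t ht ξ hξ hg).symm⟩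
  -- part (ii)
  have part2 : ∀ a b : ℝ, 0 ≤ a → a ≤ b → b < T →
      ∃ L : NNReal, LipschitzOnWith L S (Set.Icc a b) := by
    intro a b ha hab hbT
    have hsub : Icc a b ⊆ Ico 0 T := fun r hr => ⟨le_trans ha hr.1, lt_of_le_of_lt hr.2 hbT⟩
    -- bound on utx on [0,1] × [a,b]
    have hK : IsCompact (Icc (0:ℝ) 1 ×ˢ Icc a b) := isCompact_Icc.prod isCompact_Icc
    obtain ⟨C, hC⟩ := hK.exists_bound_of_continuousOn
      (hcutx.mono (prod_mono (subset_univ _) hsub))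
    set M : ℝ := max C 0 with hM
    have hM0 : 0 ≤ M := le_max_right _ _
    -- Lipschitz bound for t ↦ ux ξ t on [a,b], ξ ∈ [0,1]
    have hlip1 : ∀ ξ ∈ Icc (0:ℝ) 1, ∀ s ∈ Icc a b, ∀ r ∈ Icc a b,
        ‖ux ξ s - ux ξ r‖ ≤ M * ‖s - r‖ := by
      intro ξ hξ s hs r hr
      refine (convex_Icc a b).norm_image_sub_le_of_norm_hasDerivWithin_le
        (fun y hy => ((hutx ξ y (hsub hy)).mono hsub)) (fun y hy => ?_) hr hs
      exact le_trans (hC (ξ, y) ⟨hξ, hy⟩) (le_max_left _ _)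
    have hSd : ∀ s ∈ Icc a b, ∀ r ∈ Icc a b, S s - S r ≤ M * |s - r| := by
      intro s hs r hr
      obtain ⟨ξ, hξ, hg⟩ := key s (hsub hs)
      have h1 : S s = ux ξ s := hSval s (hsub hs) ξ hξ hg
      have h2 : ux ξ r ≤ S r := hle r (hsub hr) ξ
      have h3 : ux ξ s - ux ξ r ≤ M * |s - r| := by
        have := hlip1 ξ hξ s hs r hr
        rw [Real.norm_eq_abs, Real.norm_eq_abs] at this
        calc ux ξ s - ux ξ r ≤ |ux ξ s - ux ξ r| := le_abs_self _
          _ ≤ M * |s - r| := this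
      linarith
    refine ⟨M.toNNReal, LipschitzOnWith.of_dist_le_mul fun s hs r hr => ?_⟩
    rw [Real.dist_eq, Real.dist_eq, Real.coe_toNNReal M hM0]
    rw [abs_sub_le_iff]
    refine ⟨hSd s hs r hr, ?_⟩
    have := hSd r hr s hs
    rwa [abs_sub_comm r s] at this
  -- part (iii-a) : a.e. differentiability
  have part3 : ∀ᵐ t ∂volume, t ∈ Set.Ioo (0:ℝ) T → DifferentiableAt ℝ S t := by
    have hbn : ∀ n : ℕ, ∀ᵐ t ∂volume,
        t ∈ Ioo (0:ℝ) (max 0 (T - 1/(n+1))) → DifferentiableAt ℝ S t := by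
      intro n
      set b : ℝ := max 0 (T - 1/(n+1)) with hbdef
      have hb0 : (0:ℝ) ≤ b := le_max_left _ _
      have hbT : b < T := by
        apply max_lt hT
        have : (0:ℝ) < 1/(n+1) := by positivity
        linarith
      obtain ⟨L, hL⟩ := part2 0 b le_rfl hb0 hbT
      filter_upwards [hL.ae_differentiableWithinAt_of_mem] with t ht hmem
      have hicc : Icc (0:ℝ) b ∈ nhds t := Icc_mem_nhds hmem.1 hmem.2
      exact (ht (Ioo_subset_Icc_self hmem)).differentiableAt hicc
    filter_upwards [ae_all_iff.2 hbn] with t ht hmem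
    obtain ⟨n, hn⟩ := exists_nat_one_div_lt (show (0:ℝ) < T - t by linarith [hmem.2])
    refine ht n ⟨hmem.1, ?_⟩
    refine lt_max_of_lt_right ?_
    linarith
  refine ⟨part1, part2, part3, ?_⟩
  -- part (iii-b)
  filter_upwards [part3] with t ht hmem ξ hξ
  have htI : t ∈ Ico (0:ℝ) T := ⟨hmem.1.le, hmem.2⟩
  have hnhds : Ico (0:ℝ) T ∈ nhds t := Ico_mem_nhds hmem.1 hmem.2
  have hd : HasDerivAt (fun s => ux ξ s) (utx ξ t) t :=
    (hutx ξ t htI).hasDerivAt hnhds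
  have hdS : HasDerivAt S (deriv S t) t := (ht hmem).hasDerivAt
  have hmin : IsLocalMin (fun s => S s - ux ξ s) t := by
    have : ∀ s ∈ Ico (0:ℝ) T, S t - ux ξ t ≤ S s - ux ξ s := by
      intro s hs
      have := hle s hs ξ
      rw [hξ]
      simp only [sub_self]
      linarith
    exact Filter.eventually_of_mem hnhds fun s hs => by
      simpa [hξ] using this s hs
  have hzero : deriv S t - utx ξ t = 0 :=
    hmin.hasDerivAt_eq_zero (hdS.sub hd)
  linarith
end
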